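/- arXiv:1011.5686 — 3 statements merged into one kernel-verified Lean document; each statement's English description precedes it below -/
import Mathlib

section
/- For Polish spaces S and S', probability measures μ on S, μ' on S', and ν a probability measure on S×S' with first marginal ν⁽¹⁾ on S, the relative entropy satisfies the chain rule H(ν | μ⊗μ') = H(ν⁽¹⁾ | μ) + H(ν | ν⁽¹⁾⊗μ'). -/
open MeasureTheory ProbabilityTheory Filter Real

open Classical in
/-- Relative entropy `H(ν|μ)`. -/
noncomputable def relEnt {S : Type*} [MeasurableSpace S] (ν μ : Measure S) : EReal :=
  if ν ≪ μ ∧ Integrable (llr ν μ) ν then ((∫ x, llr ν μ x ∂ν : ℝ) : EReal) else ⊤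

section Aux

variable {α : Type*} [MeasurableSpace α]

lemma relEnt_ne_bot (ν μ : Measure α) : relEnt ν μ ≠ ⊥ := by
  unfold relEnt
  split <;> simp

/-- The negative part of the log-likelihood ratio is integrable. -/
lemma integrable_neg_part_llr (ν μ : Measure α) [SigmaFinite ν] [IsFiniteMeasure μ]
    (h : ν ≪ μ) : Integrable (fun x => max (- llr ν μ x) 0) ν := by
  have hexp : (fun x ↦ exp (- llr ν μ x)) =ᵐ[ν] fun x ↦ (μ.rnDeriv ν x).toReal :=
    exp_neg_llr h
  have hint : Integrable (fun x ↦ exp (- llr ν μ x)) ν :=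
    (Measure.integrable_toReal_rnDeriv (μ := μ) (ν := ν)).congr hexp.symm
  refine hint.mono' ?_ (ae_of_all _ fun x => ?_)
  · exact ((measurable_llr ν μ).neg.max measurable_const).aestronglyMeasurable
  · rw [Real.norm_eq_abs, abs_of_nonneg (le_max_right _ _)]
    rcases le_total (- llr ν μ x) 0 with h0 | h0
    · simpa [max_eq_right h0] using (exp_pos _).le
    · rw [max_eq_left h0]
      exact (Real.add_one_le_exp _).trans' (by linarith)

lemma integrable_of_integrable_add {ν : Measure α} {f g : α → ℝ}
    (hf : AEStronglyMeasurable f ν) (hfg : Integrable (fun x => f x + g x) ν)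
    (hfneg : Integrable (fun x => max (- f x) 0) ν)
    (hgneg : Integrable (fun x => max (- g x) 0) ν) :
    Integrable f ν := by
  have hpos : Integrable (fun x => max (f x) 0) ν := by
    refine (hfg.abs.add hgneg).mono' (hf.sup aestronglyMeasurable_const)
      (ae_of_all _ fun x => ?_)
    simp only [Pi.add_apply]
    rw [Real.norm_eq_abs, abs_of_nonneg (le_max_right _ _)]
    rcases le_total (f x) 0 with h0 | h0
    · rw [max_eq_right h0]
      positivity
    · rw [max_eq_left h0]
      have h1 : f x + g x ≤ |f x + g x| := le_abs_self _
      have h2 : - g x ≤ max (- g x) 0 := le_max_left _ _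
      linarith
  have : f = fun x => max (f x) 0 - max (- f x) 0 :=
    funext fun x => (max_zero_sub_eq_self (f x)).symm
  rw [this]
  exact hpos.sub hfneg

end Aux

section ProdAux

variable {S S' : Type*} [MeasurableSpace S] [MeasurableSpace S']

lemma prod_eq_withDensity (μ ν₁ : Measure S) (μ' : Measure S')
    [SigmaFinite μ] [IsFiniteMeasure μ'] [SigmaFinite ν₁] (h : ν₁ ≪ μ) :
    ν₁.prod μ' = (μ.prod μ').withDensity (fun p => ν₁.rnDeriv μ p.1) := by
  refine (Measure.prod_eq (μ := ν₁) (ν := μ') (μν := (μ.prod μ').withDensity fun p => ν₁.rnDeriv μ p.1) fun s t hs ht => ?_)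
  have hm : AEMeasurable (fun p : S × S' => ν₁.rnDeriv μ p.1)
      ((μ.restrict s).prod (μ'.restrict t)) :=
    ((Measure.measurable_rnDeriv ν₁ μ).comp measurable_fst).aemeasurable
  rw [withDensity_apply _ (hs.prod ht), ← Measure.prod_restrict, lintegral_prod _ hm]
  simp only [lintegral_const, Measure.restrict_apply_univ]
  rw [lintegral_mul_const' (μ' t) _ (measure_ne_top μ' t),
    Measure.setLIntegral_rnDeriv h]

end ProdAux

section AC

variable {S S' : Type*} [MeasurableSpace S] [MeasurableSpace S']

lemma ac_prod_marginal (μ : Measure S) (μ' : Measure S') (ν : Measure (S × S'))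
    [SigmaFinite μ] [IsFiniteMeasure μ'] [IsFiniteMeasure ν]
    (hAC : ν ≪ μ.prod μ') (hν₁μ : ν.map Prod.fst ≪ μ) :
    ν ≪ (ν.map Prod.fst).prod μ' := by
  have hGm : Measurable fun p : S × S' => ((ν.map Prod.fst).rnDeriv μ) p.1 :=
    (Measure.measurable_rnDeriv _ _).comp measurable_fst
  have hprod : (ν.map Prod.fst).prod μ'
      = (μ.prod μ').withDensity (fun p => ((ν.map Prod.fst).rnDeriv μ) p.1) :=
    prod_eq_withDensity μ (ν.map Prod.fst) μ' hν₁μ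
  refine Measure.AbsolutelyContinuous.mk fun A hA h0 => ?_
  rw [hprod, withDensity_apply _ hA, lintegral_eq_zero_iff hGm] at h0
  have hzero : ∀ᵐ p ∂(μ.prod μ'), p ∈ A → ((ν.map Prod.fst).rnDeriv μ) p.1 = 0 :=
    (ae_restrict_iff' hA).mp h0
  have hpos : ∀ᵐ p ∂ν, 0 < ((ν.map Prod.fst).rnDeriv μ) p.1 := by
    have h := Measure.rnDeriv_pos hν₁μ
    rw [ae_map_iff measurable_fst.aemeasurable
      (measurableSet_lt measurable_const (Measure.measurable_rnDeriv _ _))] at h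
    exact h
  rw [measure_eq_zero_iff_ae_notMem]
  filter_upwards [hAC.ae_le hzero, hpos] with p h1 h2 h3
  exact absurd (h1 h3) h2.ne'

end AC

/-- Chain rule for relative entropy:
`H(ν | μ ⊗ μ') = H(ν⁽¹⁾ | μ) + H(ν | ν⁽¹⁾ ⊗ μ')`, where `ν⁽¹⁾` is the first marginal. -/
theorem relEnt_chain_rule {S S' : Type*}
    [MeasurableSpace S] [TopologicalSpace S] [PolishSpace S] [BorelSpace S]
    [MeasurableSpace S'] [TopologicalSpace S'] [PolishSpace S'] [BorelSpace S']
    (μ : Measure S) (μ' : Measure S') (ν : Measure (S × S'))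
    [IsProbabilityMeasure μ] [IsProbabilityMeasure μ'] [IsProbabilityMeasure ν] :
    relEnt ν (μ.prod μ') =
      relEnt (ν.map Prod.fst) μ + relEnt ν ((ν.map Prod.fst).prod μ') := by
  have hν₁ : IsProbabilityMeasure (ν.map Prod.fst) :=
    Measure.isProbabilityMeasure_map measurable_fst.aemeasurable
  unfold relEnt
  by_cases hAC : ν ≪ μ.prod μ'
  · -- main case
    have hν₁μ : ν.map Prod.fst ≪ μ := by
      have h := hAC.map measurable_fst
      rwa [Measure.map_fst_prod, measure_univ, one_smul] at h
    have hνπ : ν ≪ (ν.map Prod.fst).prod μ' := ac_prod_marginal μ μ' ν hAC hν₁μ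
    have hπρ : (ν.map Prod.fst).prod μ' ≪ μ.prod μ' :=
      hν₁μ.prod Measure.AbsolutelyContinuous.rfl
    have hGm : Measurable fun p : S × S' => ((ν.map Prod.fst).rnDeriv μ) p.1 :=
      (Measure.measurable_rnDeriv _ _).comp measurable_fst
    have hπρ_deriv : ((ν.map Prod.fst).prod μ').rnDeriv (μ.prod μ')
        =ᵐ[μ.prod μ'] fun p => ((ν.map Prod.fst).rnDeriv μ) p.1 := by
      rw [prod_eq_withDensity μ (ν.map Prod.fst) μ' hν₁μ]
      exact Measure.rnDeriv_withDensity (μ.prod μ') hGm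
    have hchain : ν.rnDeriv ((ν.map Prod.fst).prod μ')
          * ((ν.map Prod.fst).prod μ').rnDeriv (μ.prod μ')
        =ᵐ[μ.prod μ'] ν.rnDeriv (μ.prod μ') :=
      Measure.rnDeriv_mul_rnDeriv hνπ
    have hGν : ∀ᵐ p ∂ν, 0 < ((ν.map Prod.fst).rnDeriv μ) p.1
        ∧ ((ν.map Prod.fst).rnDeriv μ) p.1 < ⊤ := by
      have h : ∀ᵐ x ∂(ν.map Prod.fst), 0 < ((ν.map Prod.fst).rnDeriv μ) x
          ∧ ((ν.map Prod.fst).rnDeriv μ) x < ⊤ :=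
        (Measure.rnDeriv_pos hν₁μ).and (hν₁μ.ae_le (Measure.rnDeriv_lt_top _ _))
      have hms : MeasurableSet {x : S | 0 < ((ν.map Prod.fst).rnDeriv μ) x
          ∧ ((ν.map Prod.fst).rnDeriv μ) x < ⊤} := by
        have heq : {x : S | 0 < ((ν.map Prod.fst).rnDeriv μ) x
            ∧ ((ν.map Prod.fst).rnDeriv μ) x < ⊤}
            = ((ν.map Prod.fst).rnDeriv μ) ⁻¹' (Set.Ioo 0 ⊤) := rfl
        rw [heq]
        exact (Measure.measurable_rnDeriv _ _) measurableSet_Ioo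
      rw [ae_map_iff measurable_fst.aemeasurable hms] at h
      exact h
    -- the llr decomposition
    have hllr : llr ν (μ.prod μ') =ᵐ[ν]
        fun p => llr ν ((ν.map Prod.fst).prod μ') p + llr (ν.map Prod.fst) μ p.1 := by
      filter_upwards [hAC.ae_le hchain, hAC.ae_le hπρ_deriv, Measure.rnDeriv_pos hνπ,
        hνπ.ae_le (Measure.rnDeriv_lt_top ν _), hGν] with p h1 h2 h3 h4 h5
      have ha : (ν.rnDeriv ((ν.map Prod.fst).prod μ') p).toReal ≠ 0 :=
        (ENNReal.toReal_pos h3.ne' h4.ne).ne'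
      have hb : (((ν.map Prod.fst).rnDeriv μ) p.1).toReal ≠ 0 :=
        (ENNReal.toReal_pos h5.1.ne' h5.2.ne).ne'
      rw [llr, ← h1, Pi.mul_apply, h2, ENNReal.toReal_mul, Real.log_mul ha hb]
      rfl
    have hfneg : Integrable
        (fun p => max (- llr ν ((ν.map Prod.fst).prod μ') p) 0) ν :=
      integrable_neg_part_llr ν _ hνπ
    have hg_int_iff : Integrable (fun p : S × S' => llr (ν.map Prod.fst) μ p.1) ν ↔
        Integrable (llr (ν.map Prod.fst) μ) (ν.map Prod.fst) :=
      (integrable_map_measure (stronglyMeasurable_llr _ _).aestronglyMeasurable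
        measurable_fst.aemeasurable).symm
    have hgneg : Integrable (fun p : S × S' => max (- llr (ν.map Prod.fst) μ p.1) 0) ν := by
      have h : Integrable (fun x => max (- llr (ν.map Prod.fst) μ x) 0) (ν.map Prod.fst) :=
        integrable_neg_part_llr _ μ hν₁μ
      exact (integrable_map_measure (((measurable_llr _ _).neg.max
        measurable_const).aestronglyMeasurable) measurable_fst.aemeasurable).mp h
    have key : Integrable (llr ν (μ.prod μ')) ν ↔
        (Integrable (llr ν ((ν.map Prod.fst).prod μ')) ν ∧
          Integrable (llr (ν.map Prod.fst) μ) (ν.map Prod.fst)) := by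
      constructor
      · intro h
        have hsum : Integrable (fun p => llr ν ((ν.map Prod.fst).prod μ') p
            + llr (ν.map Prod.fst) μ p.1) ν := h.congr hllr
        refine ⟨integrable_of_integrable_add
          (stronglyMeasurable_llr _ _).aestronglyMeasurable hsum hfneg hgneg, ?_⟩
        have hsum' : Integrable (fun p : S × S' => llr (ν.map Prod.fst) μ p.1
            + llr ν ((ν.map Prod.fst).prod μ') p) ν :=
          hsum.congr (ae_of_all _ fun p => add_comm _ _)
        exact hg_int_iff.mp (integrable_of_integrable_add
          (((measurable_llr _ _).comp measurable_fst).aestronglyMeasurable)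
          hsum' hgneg hfneg)
      · rintro ⟨h1, h2⟩
        exact (h1.add (hg_int_iff.mpr h2)).congr hllr.symm
    by_cases hInt : Integrable (llr ν (μ.prod μ')) ν
    · obtain ⟨h1, h2⟩ := key.mp hInt
      rw [if_pos ⟨hAC, hInt⟩, if_pos ⟨hν₁μ, h2⟩, if_pos ⟨hνπ, h1⟩]
      have hcalc : ∫ p, llr ν (μ.prod μ') p ∂ν
          = ∫ x, llr (ν.map Prod.fst) μ x ∂(ν.map Prod.fst)
            + ∫ p, llr ν ((ν.map Prod.fst).prod μ') p ∂ν := by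
        rw [integral_congr_ae hllr, integral_add h1 (hg_int_iff.mpr h2),
          integral_map measurable_fst.aemeasurable
            (stronglyMeasurable_llr _ _).aestronglyMeasurable]
        ring
      rw [hcalc]
      exact_mod_cast rfl
    · rw [if_neg (fun h => hInt h.2)]
      have hne : ¬ (Integrable (llr ν ((ν.map Prod.fst).prod μ')) ν ∧
          Integrable (llr (ν.map Prod.fst) μ) (ν.map Prod.fst)) :=
        fun h => hInt (key.mpr h)
      by_cases hi2 : (ν.map Prod.fst) ≪ μ ∧ Integrable (llr (ν.map Prod.fst) μ) (ν.map Prod.fst)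
      · rw [if_pos hi2, if_neg (fun h => hne ⟨h.2, hi2.2⟩)]
        exact (EReal.coe_add_top _).symm
      · rw [if_neg hi2]
        refine (EReal.top_add_of_ne_bot ?_).symm
        split <;> simp
  · -- LHS is ⊤
    rw [if_neg (fun h => hAC h.1)]
    by_cases h2 : (ν.map Prod.fst) ≪ μ
    · have hνπ : ¬ ν ≪ (ν.map Prod.fst).prod μ' :=
        fun h => hAC (h.trans (h2.prod Measure.AbsolutelyContinuous.rfl))
      have h3 : ¬ (ν ≪ (ν.map Prod.fst).prod μ'
          ∧ Integrable (llr ν ((ν.map Prod.fst).prod μ')) ν) := fun h => hνπ h.1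
      rw [if_neg h3]
      refine (EReal.add_top_of_ne_bot ?_).symm
      split <;> simp
    · rw [if_neg (fun h => h2 h.1)]
      refine (EReal.top_add_of_ne_bot ?_).symm
      split <;> simp
end

section
/- The map ν ↦ H(ν | ν⁽¹⁾⊗μ') from probability measures on S×S' to [0,∞] is lower semicontinuous with respect to the weak topology, where ν⁽¹⁾ is the first marginal of ν. -/
open MeasureTheory ProbabilityTheory Filter Real
open scoped Topology BoundedContinuousFunction

namespace RelEntAux


/-- `phi t r = t*r - e^t + 1`, the integrand in the variational lower bound. -/
noncomputable def phi (t r : ℝ) : ℝ := t * r - Real.exp t + 1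

lemma phi_le (r t : ℝ) (hr : 0 ≤ r) : phi t r ≤ r * Real.log r - r + 1 := by
  rcases hr.eq_or_lt with h | h
  · simp only [phi, ← h, mul_zero, Real.log_zero, zero_mul, zero_sub, zero_add]
    nlinarith [Real.exp_pos t]
  · have h1 : t - Real.log r ≤ Real.exp (t - Real.log r) - 1 := by
      linarith [Real.add_one_le_exp (t - Real.log r)]
    have h2 : r * (t - Real.log r) ≤ r * (Real.exp (t - Real.log r) - 1) :=
      mul_le_mul_of_nonneg_left h1 h.le
    have h3 : r * Real.exp (t - Real.log r) = Real.exp t := by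
      rw [Real.exp_sub, Real.exp_log h]
      field_simp
    unfold phi
    nlinarith [h2, h3]

lemma phi_mono_left {r t s : ℝ} (hr : 0 < r) (hts : t ≤ s) (hs : s ≤ Real.log r) :
    phi t r ≤ phi s r := by
  have h1 : (t - s) + 1 ≤ Real.exp (t - s) := Real.add_one_le_exp _
  have h2 : Real.exp t = Real.exp s * Real.exp (t - s) := by
    rw [← Real.exp_add]; ring_nf
  have h3 : Real.exp s ≤ r := by
    calc Real.exp s ≤ Real.exp (Real.log r) := Real.exp_le_exp.2 hs
    _ = r := Real.exp_log hr
  have h4 : Real.exp s - Real.exp t ≤ Real.exp s * (s - t) := by nlinarith [Real.exp_pos s]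
  have h5 : Real.exp s * (s - t) ≤ r * (s - t) := by nlinarith
  unfold phi
  nlinarith

lemma phi_mono_right {r t s : ℝ} (hr : 0 < r) (hs : Real.log r ≤ s) (hst : s ≤ t) :
    phi t r ≤ phi s r := by
  have h1 : (t - s) + 1 ≤ Real.exp (t - s) := Real.add_one_le_exp _
  have h2 : Real.exp t = Real.exp s * Real.exp (t - s) := by
    rw [← Real.exp_add]; ring_nf
  have h3 : r ≤ Real.exp s := by
    calc r = Real.exp (Real.log r) := (Real.exp_log hr).symm
    _ ≤ Real.exp s := Real.exp_le_exp.2 hs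
  have h4 : Real.exp s * (t - s) ≤ Real.exp t - Real.exp s := by nlinarith [Real.exp_pos s]
  have h5 : r * (t - s) ≤ Real.exp s * (t - s) := by nlinarith
  unfold phi
  nlinarith

/-- truncation of `log r` to `[-n, n]`, with value `-n` when `r = 0`. -/
noncomputable def clamp (n : ℕ) (r : ℝ) : ℝ :=
  if r = 0 then -(n : ℝ) else max (min (Real.log r) n) (-(n : ℝ))

lemma clamp_of_zero (n : ℕ) {r : ℝ} (h : r = 0) : clamp n r = -(n : ℝ) := by
  simp only [clamp]; rw [if_pos h]

lemma neg_nat_nonpos (k : ℕ) : -(k : ℝ) ≤ 0 := neg_nonpos.2 (Nat.cast_nonneg _)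

lemma abs_clamp_le (n : ℕ) (r : ℝ) : |clamp n r| ≤ n := by
  unfold clamp
  split_ifs with h
  · simp
  · rw [abs_le]
    refine ⟨le_max_right _ _, max_le (min_le_right _ _) ?_⟩
    exact le_trans (neg_nat_nonpos n) (Nat.cast_nonneg _)

lemma clamp_of_log_nonneg {n : ℕ} {r : ℝ} (hr0 : r ≠ 0) (hL0 : 0 ≤ Real.log r) :
    clamp n r = min (Real.log r) n := by
  simp only [clamp]
  rw [if_neg hr0, max_eq_left]
  exact le_trans (neg_nat_nonpos n) (le_min hL0 (Nat.cast_nonneg _))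

lemma clamp_of_log_neg {n : ℕ} {r : ℝ} (hr0 : r ≠ 0) (hL0 : Real.log r < 0) :
    clamp n r = max (Real.log r) (-(n : ℝ)) := by
  simp only [clamp]
  rw [if_neg hr0, min_eq_left]
  exact le_trans hL0.le (Nat.cast_nonneg _)

lemma clamp_phi_mono {r : ℝ} (hr : 0 ≤ r) : Monotone fun n : ℕ => phi (clamp n r) r := by
  intro n m hnm
  dsimp only
  rcases hr.eq_or_lt with h | h
  · rw [clamp_of_zero n h.symm, clamp_of_zero m h.symm]
    simp only [phi, ← h, mul_zero]
    have : Real.exp (-(m : ℝ)) ≤ Real.exp (-(n : ℝ)) :=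
      Real.exp_le_exp.2 (neg_le_neg (Nat.cast_le.2 hnm))
    linarith
  · have hr0 : r ≠ 0 := h.ne'
    by_cases hL0 : 0 ≤ Real.log r
    · rw [clamp_of_log_nonneg hr0 hL0, clamp_of_log_nonneg hr0 hL0]
      exact phi_mono_left h (min_le_min le_rfl (Nat.cast_le.2 hnm)) (min_le_left _ _)
    · push_neg at hL0
      rw [clamp_of_log_neg hr0 hL0, clamp_of_log_neg hr0 hL0]
      refine phi_mono_right h (le_max_left _ _) ?_
      exact max_le_max le_rfl (neg_le_neg (Nat.cast_le.2 hnm))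

lemma clamp_phi_nonneg (n : ℕ) {r : ℝ} (hr : 0 ≤ r) : 0 ≤ phi (clamp n r) r := by
  have hphi0 : phi 0 r = 0 := by simp [phi]
  rcases hr.eq_or_lt with h | h
  · rw [clamp_of_zero n h.symm]
    simp only [phi, ← h, mul_zero]
    have : Real.exp (-(n : ℝ)) ≤ 1 := Real.exp_le_one_iff.2 (neg_nat_nonpos n)
    linarith
  · have hr0 : r ≠ 0 := h.ne'
    by_cases hL0 : 0 ≤ Real.log r
    · rw [← hphi0, clamp_of_log_nonneg hr0 hL0]
      exact phi_mono_left h (le_min hL0 (Nat.cast_nonneg _)) (min_le_left _ _)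
    · push_neg at hL0
      rw [← hphi0, clamp_of_log_neg hr0 hL0]
      exact phi_mono_right h (le_max_left _ _) (max_le hL0.le (neg_nat_nonpos n))

lemma clamp_phi_tendsto {r : ℝ} (hr : 0 ≤ r) :
    Tendsto (fun n : ℕ => phi (clamp n r) r) atTop (𝓝 (r * Real.log r - r + 1)) := by
  rcases hr.eq_or_lt with h | h
  · have heq : (fun n : ℕ => phi (clamp n r) r) = fun n : ℕ => 1 - Real.exp (-(n : ℝ)) := by
      funext n
      rw [clamp_of_zero n h.symm]
      simp only [phi, ← h, mul_zero]
      ring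
    rw [heq, ← h]
    simp only [zero_mul, mul_zero, zero_sub, zero_add, sub_zero]
    have h0 : Tendsto (fun n : ℕ => Real.exp (-(n : ℝ))) atTop (𝓝 0) := by
      apply Real.tendsto_exp_atBot.comp
      exact tendsto_neg_atTop_atBot.comp tendsto_natCast_atTop_atTop
    have := (tendsto_const_nhds (x := (1:ℝ)) (f := atTop (α := ℕ))).sub h0
    simpa using this
  · have hr0 : r ≠ 0 := h.ne'
    apply Tendsto.congr' (f₁ := fun _ : ℕ => r * Real.log r - r + 1)
    · filter_upwards [eventually_ge_atTop ⌈|Real.log r|⌉₊] with n hn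
      have habs : |Real.log r| ≤ (n : ℝ) := le_trans (Nat.le_ceil _) (Nat.cast_le.2 hn)
      have e1 : clamp n r = Real.log r := by
        simp only [clamp]
        rw [if_neg hr0, min_eq_left (le_trans (le_abs_self _) habs),
          max_eq_left (le_trans (neg_le_neg habs) (neg_abs_le _))]
      rw [e1, phi, Real.exp_log h]
      ring
    · exact tendsto_const_nhds


lemma measurable_clamp_comp {α : Type*} [MeasurableSpace α] {f : α → ℝ} (hf : Measurable f)
    (n : ℕ) : Measurable fun x => clamp n (f x) := by
  unfold clamp
  exact Measurable.ite (hf (measurableSet_singleton 0)) measurable_const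
    (((Real.measurable_log.comp hf).min measurable_const).max measurable_const)

lemma abs_sub_le_of {a b M N : ℝ} (ha : |a| ≤ M) (hb : |b| ≤ N) : |a - b| ≤ M + N := by
  rw [abs_le] at *
  constructor <;> linarith [ha.1, ha.2, hb.1, hb.2]

lemma clamp_dist {a b M : ℝ} (ha : |a| ≤ M) : |a - max (min b M) (-M)| ≤ |a - b| := by
  have h1 := abs_le.1 ha
  have hM : 0 ≤ M := le_trans (abs_nonneg a) ha
  rcases le_total M b with hb | hb
  · rw [min_eq_right hb, max_eq_left (by linarith)]
    rw [abs_le]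
    constructor
    · calc -|a - b| ≤ a - b := neg_abs_le _
      _ ≤ a - M := by linarith
    · calc a - M ≤ 0 := by linarith
      _ ≤ |a - b| := abs_nonneg _
  · rcases le_total b (-M) with hb2 | hb2
    · rw [min_eq_left (by linarith), max_eq_right hb2]
      rw [abs_le]
      constructor
      · calc -|a - b| ≤ 0 := neg_nonpos.2 (abs_nonneg _)
        _ ≤ a - -M := by linarith
      · calc a - -M ≤ a - b := by linarith
        _ ≤ |a - b| := le_abs_self _
    · rw [min_eq_left (by linarith), max_eq_left hb2]

lemma abs_exp_sub_exp {a b M : ℝ} (ha : |a| ≤ M) (hb : |b| ≤ M) :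
    |Real.exp a - Real.exp b| ≤ Real.exp M * |a - b| := by
  have key : ∀ s t : ℝ, t ≤ s → |s| ≤ M → Real.exp s - Real.exp t ≤ Real.exp M * (s - t) := by
    intro s t hts hs
    have h1 : (t - s) + 1 ≤ Real.exp (t - s) := Real.add_one_le_exp _
    have h2 : Real.exp t = Real.exp s * Real.exp (t - s) := by rw [← Real.exp_add]; ring_nf
    have h3 : Real.exp s ≤ Real.exp M := Real.exp_le_exp.2 (le_trans (le_abs_self s) hs)
    nlinarith [Real.exp_pos s]
  rcases le_total b a with h | h
  · rw [abs_of_nonneg (by linarith [Real.exp_le_exp.2 h] : (0:ℝ) ≤ Real.exp a - Real.exp b),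
      abs_of_nonneg (by linarith : (0:ℝ) ≤ a - b)]
    exact key a b h ha
  · rw [abs_sub_comm, abs_sub_comm a b,
      abs_of_nonneg (by linarith [Real.exp_le_exp.2 h] : (0:ℝ) ≤ Real.exp b - Real.exp a),
      abs_of_nonneg (by linarith : (0:ℝ) ≤ b - a)]
    exact key b a h hb
lemma ereal_eq_top {S : EReal} (h : ∀ C : ℝ, (C : EReal) ≤ S) : S = ⊤ := by
  induction S using EReal.rec with
  | bot => simpa using h 0
  | coe s =>
      have := EReal.coe_le_coe_iff.1 (h (s + 1))
      linarith
  | top => rfl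

variable {α : Type*} [MeasurableSpace α] (ν μ : Measure α)

/-- The variational functional `f ↦ ∫ f ∂ν - ∫ (e^f - 1) ∂μ`. -/
noncomputable def DV (f : α → ℝ) : ℝ := ∫ x, f x ∂ν - ∫ x, (Real.exp (f x) - 1) ∂μ

lemma integrable_of_bounded {m : Measure α} [IsFiniteMeasure m] {f : α → ℝ}
    (hf : AEStronglyMeasurable f m) {C : ℝ} (hC : ∀ x, |f x| ≤ C) : Integrable f m :=
  (integrable_const C).mono' hf (ae_of_all _ (by simpa [Real.norm_eq_abs] using hC))

lemma abs_exp_sub_one_le {C t : ℝ} (h : |t| ≤ C) : |Real.exp t - 1| ≤ Real.exp C + 1 := by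
  have h1 : Real.exp t ≤ Real.exp C := Real.exp_le_exp.2 (le_trans (le_abs_self t) h)
  have h2 : 0 < Real.exp t := Real.exp_pos t
  rw [abs_le]; constructor <;> nlinarith

variable [IsProbabilityMeasure ν] [IsProbabilityMeasure μ]

lemma integrable_exp_sub_one {f : α → ℝ} (hfm : Measurable f) {C : ℝ} (hfb : ∀ x, |f x| ≤ C) :
    Integrable (fun x => Real.exp (f x) - 1) μ :=
  integrable_of_bounded ((Real.measurable_exp.comp hfm).sub measurable_const).aestronglyMeasurable
    (fun x => abs_exp_sub_one_le (hfb x))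

lemma integrable_mul_rnDeriv (hac : ν ≪ μ) {f : α → ℝ} (hfm : Measurable f) {C : ℝ}
    (hfb : ∀ x, |f x| ≤ C) :
    Integrable (fun x => (ν.rnDeriv μ x).toReal * f x) μ := by
  have hfν : Integrable f ν := integrable_of_bounded hfm.aestronglyMeasurable hfb
  simpa [smul_eq_mul] using (integrable_rnDeriv_smul_iff hac).2 hfν

/-- Representation of `DV` as a single integral against `μ`, when `ν ≪ μ`. -/
lemma DV_eq_integral_phi (hac : ν ≪ μ) {f : α → ℝ} (hfm : Measurable f) {C : ℝ}
    (hfb : ∀ x, |f x| ≤ C) :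
    DV ν μ f = ∫ x, phi (f x) ((ν.rnDeriv μ x).toReal) ∂μ := by
  have h1 : ∫ x, f x ∂ν = ∫ x, (ν.rnDeriv μ x).toReal * f x ∂μ := by
    rw [← integral_rnDeriv_smul hac]
    simp [smul_eq_mul]
  have h2 : Integrable (fun x => (ν.rnDeriv μ x).toReal * f x) μ :=
    integrable_mul_rnDeriv ν μ hac hfm hfb
  have h3 : Integrable (fun x => Real.exp (f x) - 1) μ := integrable_exp_sub_one μ hfm hfb
  have h4 : (fun x => phi (f x) ((ν.rnDeriv μ x).toReal))
      = fun x => (ν.rnDeriv μ x).toReal * f x - (Real.exp (f x) - 1) := by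
    funext x; simp only [phi]; ring
  rw [DV, h4, integral_sub h2 h3, h1]

lemma integrable_rnDeriv_mul_log (hac : ν ≪ μ) (hint : Integrable (llr ν μ) ν) :
    Integrable (fun x => (ν.rnDeriv μ x).toReal * Real.log ((ν.rnDeriv μ x).toReal)) μ := by
  simpa [llr, smul_eq_mul] using (integrable_rnDeriv_smul_iff hac).2 hint

lemma integral_G_eq (hac : ν ≪ μ) (hint : Integrable (llr ν μ) ν) :
    ∫ x, ((ν.rnDeriv μ x).toReal * Real.log ((ν.rnDeriv μ x).toReal)
      - (ν.rnDeriv μ x).toReal + 1) ∂μ = ∫ x, llr ν μ x ∂ν := by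
  have hll := integrable_rnDeriv_mul_log ν μ hac hint
  have hρint : Integrable (fun x => (ν.rnDeriv μ x).toReal) μ :=
    Measure.integrable_toReal_rnDeriv
  have hρ1 : ∫ x, (ν.rnDeriv μ x).toReal ∂μ = 1 := by
    rw [Measure.integral_toReal_rnDeriv hac]; simp
  have h2 : ∫ x, llr ν μ x ∂ν
      = ∫ x, (ν.rnDeriv μ x).toReal * Real.log ((ν.rnDeriv μ x).toReal) ∂μ := by
    rw [← integral_rnDeriv_smul hac]
    simp [llr, smul_eq_mul]
  have e1 : ∫ x, ((ν.rnDeriv μ x).toReal * Real.log ((ν.rnDeriv μ x).toReal)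
      - (ν.rnDeriv μ x).toReal + 1) ∂μ
      = (∫ x, ((ν.rnDeriv μ x).toReal * Real.log ((ν.rnDeriv μ x).toReal)
        - (ν.rnDeriv μ x).toReal) ∂μ) + ∫ _x, (1 : ℝ) ∂μ :=
    integral_add (hll.sub hρint) (integrable_const 1)
  have e2 : ∫ x, ((ν.rnDeriv μ x).toReal * Real.log ((ν.rnDeriv μ x).toReal)
      - (ν.rnDeriv μ x).toReal) ∂μ
      = (∫ x, (ν.rnDeriv μ x).toReal * Real.log ((ν.rnDeriv μ x).toReal) ∂μ)
        - ∫ x, (ν.rnDeriv μ x).toReal ∂μ :=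
    integral_sub hll hρint
  rw [e1, e2, hρ1, h2]
  simp

/-- Easy direction: `DV f ≤ ∫ llr` for bounded measurable `f`. -/
lemma DV_le_integral_llr (hac : ν ≪ μ) (hint : Integrable (llr ν μ) ν) {f : α → ℝ}
    (hfm : Measurable f) {C : ℝ} (hfb : ∀ x, |f x| ≤ C) :
    DV ν μ f ≤ ∫ x, llr ν μ x ∂ν := by
  rw [DV_eq_integral_phi ν μ hac hfm hfb, ← integral_G_eq ν μ hac hint]
  apply integral_mono ?_ ?_
  · exact fun x => phi_le _ _ ENNReal.toReal_nonneg
  · have h4 : (fun x => phi (f x) ((ν.rnDeriv μ x).toReal))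
        = fun x => (ν.rnDeriv μ x).toReal * f x - (Real.exp (f x) - 1) := by
      funext x; simp only [phi]; ring
    rw [h4]
    exact (integrable_mul_rnDeriv ν μ hac hfm hfb).sub (integrable_exp_sub_one μ hfm hfb)
  · exact ((integrable_rnDeriv_mul_log ν μ hac hint).sub
      Measure.integrable_toReal_rnDeriv).add (integrable_const 1)

/-- Hard direction, unified: if `S` dominates `DV f` for all bounded measurable `f`,
then `relEnt ν μ ≤ S`, provided `ν ≪ μ`. -/
lemma relEnt_le_of_forall (hac : ν ≪ μ) {S : EReal}
    (hS : ∀ (n : ℕ) (f : α → ℝ), Measurable f → (∀ x, |f x| ≤ (n : ℝ)) →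
      ((DV ν μ f : ℝ) : EReal) ≤ S) :
    relEnt ν μ ≤ S := by
  set ρ := fun x => (ν.rnDeriv μ x).toReal with hρdef
  have hρm : Measurable ρ := (Measure.measurable_rnDeriv ν μ).ennreal_toReal
  have hρnn : ∀ x, 0 ≤ ρ x := fun x => ENNReal.toReal_nonneg
  set fN := fun (n : ℕ) (x : α) => clamp n (ρ x) with hfNdef
  set gN := fun (n : ℕ) (x : α) => phi (clamp n (ρ x)) (ρ x) with hgNdef
  set G := fun x => ρ x * Real.log (ρ x) - ρ x + 1 with hGdef
  have hfNm : ∀ n, Measurable (fN n) := fun n => measurable_clamp_comp hρm n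
  have hfNb : ∀ n x, |fN n x| ≤ (n : ℝ) := fun n x => abs_clamp_le n (ρ x)
  have hgN_eq : ∀ n, gN n = fun x => ρ x * fN n x - (Real.exp (fN n x) - 1) := by
    intro n; funext x; rw [hgNdef]; dsimp only; simp only [phi]; ring
  have hgN_int : ∀ n, Integrable (gN n) μ := by
    intro n
    rw [hgN_eq n]
    exact (integrable_mul_rnDeriv ν μ hac (hfNm n) (hfNb n)).sub
      (integrable_exp_sub_one μ (hfNm n) (hfNb n))
  have hgNm : ∀ n, Measurable (gN n) := by
    intro n
    rw [hgN_eq n]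
    exact ((hρm.mul (hfNm n)).sub ((Real.measurable_exp.comp (hfNm n)).sub measurable_const))
  have hDV : ∀ n, DV ν μ (fN n) = ∫ x, gN n x ∂μ :=
    fun n => DV_eq_integral_phi ν μ hac (hfNm n) (hfNb n)
  by_cases hint : Integrable (llr ν μ) ν
  · simp only [relEnt, if_pos (And.intro hac hint)]
    have hll := integrable_rnDeriv_mul_log ν μ hac hint
    have hρint : Integrable ρ μ := Measure.integrable_toReal_rnDeriv
    have hGint : Integrable G μ := (hll.sub hρint).add (integrable_const 1)
    have hlim : Tendsto (fun n => ∫ x, gN n x ∂μ) atTop (𝓝 (∫ x, G x ∂μ)) :=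
      integral_tendsto_of_tendsto_of_monotone hgN_int hGint
        (ae_of_all _ fun x => clamp_phi_mono (hρnn x))
        (ae_of_all _ fun x => clamp_phi_tendsto (hρnn x))
    have hGeq : ∫ x, G x ∂μ = ∫ x, llr ν μ x ∂ν := integral_G_eq ν μ hac hint
    rw [hGeq] at hlim
    refine le_of_tendsto ((continuous_coe_real_ereal.tendsto _).comp hlim) ?_
    refine Eventually.of_forall fun n => ?_
    have := hS n (fN n) (hfNm n) (hfNb n)
    rwa [hDV n] at this
  · simp only [relEnt, if_neg (fun h : _ ∧ _ => hint h.2)]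
    suffices hStop : S = ⊤ by rw [hStop]
    apply ereal_eq_top
    intro C
    have hGnn : ∀ x, 0 ≤ G x := by
      intro x
      have := phi_le (ρ x) 0 (hρnn x)
      simp only [phi] at this
      simpa using this
    have hGm : Measurable G :=
      ((hρm.mul (Real.measurable_log.comp hρm)).sub hρm).add measurable_const
    have hGtop : ∫⁻ x, ENNReal.ofReal (G x) ∂μ = ⊤ := by
      by_contra hfin
      have hGint : Integrable G μ := by
        refine ⟨hGm.aestronglyMeasurable, ?_⟩
        rw [hasFiniteIntegral_iff_ofReal (ae_of_all _ hGnn)]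
        exact lt_top_iff_ne_top.2 hfin
      have h2 : Integrable (fun x => ρ x * Real.log (ρ x)) μ := by
        have h3 := (hGint.add (Measure.integrable_toReal_rnDeriv (μ := ν) (ν := μ))).sub (integrable_const 1)
        refine h3.congr (ae_of_all _ fun x => ?_)
        simp only [Pi.sub_apply, Pi.add_apply, hGdef, hρdef]
        ring
      exact hint ((integrable_rnDeriv_smul_iff hac).1
        (by simpa [llr, smul_eq_mul] using h2))
    have hmono_l : Tendsto (fun n => ∫⁻ x, ENNReal.ofReal (gN n x) ∂μ) atTop
        (𝓝 (∫⁻ x, ENNReal.ofReal (G x) ∂μ)) := by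
      refine lintegral_tendsto_of_tendsto_of_monotone
        (fun n => ((hgNm n).ennreal_ofReal).aemeasurable)
        (ae_of_all _ fun x n m hnm => ENNReal.ofReal_le_ofReal (clamp_phi_mono (hρnn x) hnm))
        (ae_of_all _ fun x => (ENNReal.continuous_ofReal.tendsto _).comp
          (clamp_phi_tendsto (hρnn x)))
    rw [hGtop] at hmono_l
    have hev : ∀ᶠ n in atTop, ENNReal.ofReal C < ∫⁻ x, ENNReal.ofReal (gN n x) ∂μ :=
      hmono_l.eventually (eventually_gt_nhds ENNReal.ofReal_lt_top)
    obtain ⟨n, hn⟩ := hev.exists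
    have heq : ∫⁻ x, ENNReal.ofReal (gN n x) ∂μ = ENNReal.ofReal (∫ x, gN n x ∂μ) :=
      (ofReal_integral_eq_lintegral_ofReal (hgN_int n)
        (ae_of_all _ fun x => clamp_phi_nonneg n (hρnn x))).symm
    have hCle : C ≤ ∫ x, gN n x ∂μ := by
      by_contra hlt
      push_neg at hlt
      rw [heq] at hn
      exact absurd (ENNReal.ofReal_le_ofReal hlt.le) (not_le.2 hn)
    calc (C : EReal) ≤ ((∫ x, gN n x ∂μ : ℝ) : EReal) := EReal.coe_le_coe_iff.2 hCle
    _ ≤ S := by rw [← hDV n]; exact hS n (fN n) (hfNm n) (hfNb n)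


section Topological

variable [TopologicalSpace α] [PolishSpace α] [BorelSpace α]

lemma exists_DV_cb_ge {f : α → ℝ} (hfm : Measurable f) (n : ℕ) (hfb : ∀ x, |f x| ≤ (n : ℝ))
    {ε : ℝ} (hε : 0 < ε) : ∃ g : α →ᵇ ℝ, DV ν μ f - ε ≤ DV ν μ g := by
  letI := TopologicalSpace.upgradeIsCompletelyMetrizable α
  have hexpn : (0 : ℝ) < 1 + Real.exp n := by positivity
  have hfκ : Integrable f (μ + ν) := integrable_of_bounded hfm.aestronglyMeasurable hfb
  obtain ⟨g0, hg0, hg0int⟩ := hfκ.exists_boundedContinuous_integral_sub_le (div_pos hε hexpn)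
  set gfun : α → ℝ := fun x => max (min (g0 x) (n : ℝ)) (-(n : ℝ)) with hgfun
  have hgcont : Continuous gfun := (g0.continuous.min continuous_const).max continuous_const
  have hgb : ∀ x, |gfun x| ≤ (n : ℝ) := by
    intro x
    rw [abs_le]
    exact ⟨le_max_right _ _, max_le (min_le_right _ _)
      (le_trans (neg_nat_nonpos n) (Nat.cast_nonneg n))⟩
  refine ⟨BoundedContinuousFunction.ofNormedAddCommGroup gfun hgcont (n : ℝ)
      (fun x => by rw [Real.norm_eq_abs]; exact hgb x), ?_⟩
  rw [show ⇑(BoundedContinuousFunction.ofNormedAddCommGroup gfun hgcont (n : ℝ)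
      (fun x => by rw [Real.norm_eq_abs]; exact hgb x)) = gfun from rfl]
  -- pointwise estimates
  have hpt : ∀ x, |f x - gfun x| ≤ |f x - g0 x| := fun x => clamp_dist (hfb x)
  -- integrability facts
  have hInt : ∀ (m : Measure α), IsProbabilityMeasure m → Integrable f m ∧ Integrable gfun m ∧
      Integrable (fun x => |f x - gfun x|) m := by
    intro m hm
    refine ⟨integrable_of_bounded hfm.aestronglyMeasurable hfb,
      integrable_of_bounded hgcont.measurable.aestronglyMeasurable hgb,
      integrable_of_bounded ((hfm.sub hgcont.measurable).abs).aestronglyMeasurable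
        (C := (n : ℝ) + n) (fun x => ?_)⟩
    rw [abs_abs]
    exact abs_sub_le_of (hfb x) (hgb x)
  obtain ⟨hfν, hgν, hdν⟩ := hInt ν inferInstance
  obtain ⟨hfμ, hgμ, hdμ⟩ := hInt μ inferInstance
  have hdκ : Integrable (fun x => |f x - gfun x|) (μ + ν) :=
    integrable_of_bounded ((hfm.sub hgcont.measurable).abs).aestronglyMeasurable
      (C := (n : ℝ) + n) (fun x => by rw [abs_abs]; exact abs_sub_le_of (hfb x) (hgb x))
  have hd0κ : Integrable (fun x => ‖f x - g0 x‖) (μ + ν) := (hfκ.sub (g0.integrable _)).norm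
  -- exp integrands
  have hef : Integrable (fun x => Real.exp (f x) - 1) μ := integrable_exp_sub_one μ hfm hfb
  have heg : Integrable (fun x => Real.exp (gfun x) - 1) μ :=
    integrable_exp_sub_one μ hgcont.measurable hgb
  have heμ : Integrable (fun x => Real.exp n * |f x - gfun x|) μ := hdμ.const_mul _
  -- the difference of the DV values
  have e1 : ∫ x, (f x - gfun x) ∂ν = ∫ x, f x ∂ν - ∫ x, gfun x ∂ν := integral_sub hfν hgν
  have e2 : ∫ x, (Real.exp (f x) - Real.exp (gfun x)) ∂μ
      = ∫ x, (Real.exp (f x) - 1) ∂μ - ∫ x, (Real.exp (gfun x) - 1) ∂μ := by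
    have e2' : ∫ x, ((Real.exp (f x) - 1) - (Real.exp (gfun x) - 1)) ∂μ
        = ∫ x, (Real.exp (f x) - 1) ∂μ - ∫ x, (Real.exp (gfun x) - 1) ∂μ := integral_sub hef heg
    rw [← e2']
    congr 1
    funext x
    ring
  have hdiff : DV ν μ f - DV ν μ gfun
      = (∫ x, (f x - gfun x) ∂ν) - ∫ x, (Real.exp (f x) - Real.exp (gfun x)) ∂μ := by
    rw [DV, DV, e1, e2]
    ring
  -- bounds
  have b1 : ∫ x, (f x - gfun x) ∂ν ≤ ∫ x, |f x - gfun x| ∂ν :=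
    integral_mono (hfν.sub hgν) hdν (fun x => le_abs_self _)
  have b2 : - ∫ x, (Real.exp (f x) - Real.exp (gfun x)) ∂μ
      ≤ ∫ x, Real.exp n * |f x - gfun x| ∂μ := by
    rw [← integral_neg]
    refine integral_mono ((hef.sub heg).congr (ae_of_all _ fun x => by simp only [Pi.sub_apply]; ring)).neg heμ
      (fun x => ?_)
    calc -(Real.exp (f x) - Real.exp (gfun x)) ≤ |Real.exp (f x) - Real.exp (gfun x)| :=
      neg_le_abs _
    _ ≤ Real.exp n * |f x - gfun x| := abs_exp_sub_exp (hfb x) (hgb x)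
  have b3 : ∫ x, Real.exp n * |f x - gfun x| ∂μ = Real.exp n * ∫ x, |f x - gfun x| ∂μ :=
    integral_const_mul _ _
  have b4 : ∫ x, |f x - gfun x| ∂(μ + ν)
      = ∫ x, |f x - gfun x| ∂μ + ∫ x, |f x - gfun x| ∂ν := integral_add_measure hdμ hdν
  have b5 : ∫ x, |f x - gfun x| ∂(μ + ν) ≤ ∫ x, ‖f x - g0 x‖ ∂(μ + ν) := by
    refine integral_mono hdκ hd0κ (fun x => ?_)
    rw [Real.norm_eq_abs]
    exact hpt x
  have hμnn : 0 ≤ ∫ x, |f x - gfun x| ∂μ := integral_nonneg (fun x => abs_nonneg _)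
  have hνnn : 0 ≤ ∫ x, |f x - gfun x| ∂ν := integral_nonneg (fun x => abs_nonneg _)
  have hκδ : ∫ x, |f x - gfun x| ∂(μ + ν) ≤ ε / (1 + Real.exp n) := le_trans b5 hg0
  have hfinal : DV ν μ f - DV ν μ gfun ≤ ε := by
    have step : DV ν μ f - DV ν μ gfun
        ≤ ∫ x, |f x - gfun x| ∂ν + Real.exp n * ∫ x, |f x - gfun x| ∂μ := by
      rw [hdiff]
      have := b2
      rw [b3] at this
      linarith
    have step2 : ∫ x, |f x - gfun x| ∂ν + Real.exp n * ∫ x, |f x - gfun x| ∂μ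
        ≤ (1 + Real.exp n) * ∫ x, |f x - gfun x| ∂(μ + ν) := by
      rw [b4]
      nlinarith [Real.exp_pos (n : ℝ), mul_nonneg (Real.exp_pos (n : ℝ)).le hνnn]
    have step3 : (1 + Real.exp n) * ∫ x, |f x - gfun x| ∂(μ + ν) ≤ ε := by
      have := mul_le_mul_of_nonneg_left hκδ hexpn.le
      rwa [mul_div_cancel₀ _ hexpn.ne'] at this
    linarith
  linarith

lemma coe_DV_le_iSup {f : α → ℝ} (hfm : Measurable f) (n : ℕ) (hfb : ∀ x, |f x| ≤ (n : ℝ)) :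
    ((DV ν μ f : ℝ) : EReal) ≤ ⨆ g : α →ᵇ ℝ, ((DV ν μ g : ℝ) : EReal) := by
  have key : ∀ k : ℕ, ((DV ν μ f - 1 / ((k : ℝ) + 1) : ℝ) : EReal)
      ≤ ⨆ g : α →ᵇ ℝ, ((DV ν μ g : ℝ) : EReal) := by
    intro k
    obtain ⟨g, hg⟩ := exists_DV_cb_ge ν μ hfm n hfb
      (ε := 1 / ((k : ℝ) + 1)) (by positivity)
    exact le_trans (EReal.coe_le_coe_iff.2 hg)
      (le_iSup (fun g : α →ᵇ ℝ => ((DV ν μ g : ℝ) : EReal)) g)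
  have htend : Tendsto (fun k : ℕ => ((DV ν μ f - 1 / ((k : ℝ) + 1) : ℝ) : EReal)) atTop
      (𝓝 ((DV ν μ f : ℝ) : EReal)) := by
    apply (continuous_coe_real_ereal.tendsto _).comp
    have h0 : Tendsto (fun k : ℕ => 1 / ((k : ℝ) + 1)) atTop (𝓝 0) :=
      tendsto_one_div_add_atTop_nhds_zero_nat
    simpa using (tendsto_const_nhds (x := DV ν μ f) (f := atTop (α := ℕ))).sub h0
  exact le_of_tendsto htend (Eventually.of_forall key)

/-- The Donsker-Varadhan-type variational formula for relative entropy. -/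
theorem relEnt_eq_iSup : relEnt ν μ = ⨆ f : α →ᵇ ℝ, ((DV ν μ f : ℝ) : EReal) := by
  apply le_antisymm
  · by_cases hac : ν ≪ μ
    · exact relEnt_le_of_forall ν μ hac (fun n f hm hb => coe_DV_le_iSup ν μ hm n hb)
    · simp only [relEnt, if_neg (fun h : _ ∧ _ => hac h.1)]
      refine le_of_eq (ereal_eq_top ?_).symm
      intro C
      obtain ⟨s, hμs, hνs⟩ : ∃ s, μ s = 0 ∧ ν s ≠ 0 := by
        by_contra hno
        push_neg at hno
        exact hac (Measure.AbsolutelyContinuous.mk fun s _ hs => hno s hs)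
      have hA : MeasurableSet (toMeasurable μ s) := measurableSet_toMeasurable μ s
      have hμA : μ (toMeasurable μ s) = 0 := by rwa [measure_toMeasurable]
      have hνA : ν (toMeasurable μ s) ≠ 0 :=
        fun h => hνs (measure_mono_null (subset_toMeasurable μ s) h)
      set c := (ν (toMeasurable μ s)).toReal with hc
      have hcpos : 0 < c := ENNReal.toReal_pos hνA (measure_ne_top ν _)
      obtain ⟨n, hn⟩ := exists_nat_ge (C / c)
      set f : α → ℝ := fun x => (toMeasurable μ s).indicator (fun _ => (n : ℝ)) x with hf
      have hfm : Measurable f := measurable_const.indicator hA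
      have hfb : ∀ x, |f x| ≤ (n : ℝ) := by
        intro x
        by_cases hx : x ∈ toMeasurable μ s
        · simp [hf, Set.indicator_of_mem hx]
        · simp [hf, Set.indicator_of_notMem hx]
      have h1 : ∫ x, f x ∂ν = c * n := by
        rw [hf, integral_indicator_const _ hA, smul_eq_mul, hc]; rfl
      have h2 : ∫ x, (Real.exp (f x) - 1) ∂μ = 0 := by
        have heq : (fun x => Real.exp (f x) - 1)
            = fun x => (toMeasurable μ s).indicator (fun _ => Real.exp n - 1) x := by
          funext x
          by_cases hx : x ∈ toMeasurable μ s
          · simp [hf, Set.indicator_of_mem hx]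
          · simp [hf, Set.indicator_of_notMem hx]
        rw [heq, integral_indicator_const _ hA, Measure.real, hμA]
        simp
      have hDVf : DV ν μ f = c * n := by rw [DV, h1, h2, sub_zero]
      have hCle : C ≤ c * n := by
        have := (div_le_iff₀ hcpos).1 hn
        nlinarith
      calc (C : EReal) ≤ ((DV ν μ f : ℝ) : EReal) := EReal.coe_le_coe_iff.2 (by rw [hDVf]; exact hCle)
      _ ≤ _ := coe_DV_le_iSup ν μ hfm n hfb
  · refine iSup_le fun f => ?_
    simp only [relEnt]
    split_ifs with h
    · refine EReal.coe_le_coe_iff.2 (DV_le_integral_llr ν μ h.1 h.2 f.continuous.measurable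
        (C := ‖f‖) fun x => ?_)
      have := f.norm_coe_le_norm x
      rwa [Real.norm_eq_abs] at this
    · exact le_top

end Topological

end RelEntAux

/-- The map `ν ↦ H(ν | ν⁽¹⁾ ⊗ μ')` is lower semicontinuous in the weak topology on
probability measures on `S × S'`. -/
theorem lowerSemicontinuous_relEnt_cond {S S' : Type*}
    [MeasurableSpace S] [TopologicalSpace S] [PolishSpace S] [BorelSpace S]
    [MeasurableSpace S'] [TopologicalSpace S'] [PolishSpace S'] [BorelSpace S']
    (μ' : Measure S') [IsProbabilityMeasure μ'] :
    LowerSemicontinuous (fun ν : ProbabilityMeasure (S × S') =>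
      relEnt (ν : Measure (S × S')) (((ν : Measure (S × S')).map Prod.fst).prod μ')) := by
  classical
  have key : ∀ f : (S × S') →ᵇ ℝ, ∃ Φ : (S × S') →ᵇ ℝ,
      ∀ ν : ProbabilityMeasure (S × S'),
        RelEntAux.DV (ν : Measure (S × S')) (((ν : Measure (S × S')).map Prod.fst).prod μ') f
          = ∫ x, Φ x ∂(ν : Measure (S × S')) := by
    intro f
    set C := Real.exp ‖f‖ + 1 with hC
    have hbnd : ∀ p : S × S', |Real.exp (f p) - 1| ≤ C := by
      intro p
      refine RelEntAux.abs_exp_sub_one_le ?_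
      have := f.norm_coe_le_norm p
      rwa [Real.norm_eq_abs] at this
    set φ : S → ℝ := fun x => ∫ y, (Real.exp (f (x, y)) - 1) ∂μ' with hφ
    have hφcont : Continuous φ := by
      refine continuous_of_dominated (bound := fun _ => C) ?_ ?_ (integrable_const C) ?_
      · intro x
        exact ((Real.continuous_exp.comp (f.continuous.comp
          (Continuous.prodMk_right x))).sub continuous_const).aestronglyMeasurable
      · intro x
        exact ae_of_all _ fun y => by rw [Real.norm_eq_abs]; exact hbnd (x, y)
      · exact ae_of_all _ fun y => (Real.continuous_exp.comp (f.continuous.comp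
          (continuous_id.prodMk continuous_const))).sub continuous_const
    have hφb : ∀ x, ‖φ x‖ ≤ C := by
      intro x
      have h := norm_integral_le_of_norm_le_const (μ := μ') (C := C)
        (ae_of_all _ fun y => by rw [Real.norm_eq_abs]; exact hbnd (x, y))
      simpa using h
    refine ⟨f - BoundedContinuousFunction.ofNormedAddCommGroup (fun p : S × S' => φ p.1)
      (hφcont.comp continuous_fst) C (fun p => hφb p.1), fun ν => ?_⟩
    haveI : IsProbabilityMeasure ((ν : Measure (S × S')).map Prod.fst) :=
      Measure.isProbabilityMeasure_map measurable_fst.aemeasurable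
    set m := ((ν : Measure (S × S')).map Prod.fst).prod μ' with hm
    have hint : Integrable (fun p : S × S' => Real.exp (f p) - 1) m :=
      RelEntAux.integrable_of_bounded
        ((Real.continuous_exp.comp f.continuous).sub continuous_const).measurable.aestronglyMeasurable
        hbnd
    have h1 : ∫ p, (Real.exp (f p) - 1) ∂m = ∫ x, φ x ∂((ν : Measure (S × S')).map Prod.fst) :=
      MeasureTheory.integral_prod _ hint
    have h2 : ∫ x, φ x ∂((ν : Measure (S × S')).map Prod.fst)
        = ∫ p, φ p.1 ∂(ν : Measure (S × S')) :=
      integral_map measurable_fst.aemeasurable hφcont.aestronglyMeasurable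
    have hfint : Integrable (fun p : S × S' => f p) (ν : Measure (S × S')) :=
      f.integrable _
    have hφint : Integrable (fun p : S × S' => φ p.1) (ν : Measure (S × S')) :=
      RelEntAux.integrable_of_bounded ((hφcont.comp continuous_fst)).measurable.aestronglyMeasurable
        (C := C) (fun p => by rw [← Real.norm_eq_abs]; exact hφb p.1)
    rw [RelEntAux.DV, h1, h2, ← integral_sub hfint hφint]
    congr 1
  choose Φ hΦ using key
  have hfun : (fun ν : ProbabilityMeasure (S × S') =>
      relEnt (ν : Measure (S × S')) (((ν : Measure (S × S')).map Prod.fst).prod μ'))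
      = fun ν : ProbabilityMeasure (S × S') => ⨆ f : (S × S') →ᵇ ℝ,
          ((∫ x, (Φ f) x ∂(ν : Measure (S × S')) : ℝ) : EReal) := by
    funext ν
    haveI : IsProbabilityMeasure ((ν : Measure (S × S')).map Prod.fst) :=
      Measure.isProbabilityMeasure_map measurable_fst.aemeasurable
    rw [RelEntAux.relEnt_eq_iSup]
    exact iSup_congr fun f => by rw [hΦ f ν]
  rw [hfun]
  apply lowerSemicontinuous_iSup
  intro f
  exact (continuous_coe_real_ereal.comp
    (MeasureTheory.ProbabilityMeasure.continuous_integral_boundedContinuousFunction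
      (Φ f))).lowerSemicontinuous
end

section
/- For the Gibbs measure G = G_{φ,m} = γ ⊗ K₂ ⊗ ⋯ ⊗ K_n defined from the Parisi recursion, for each j one has ∫ H(K_j(x⁽ʲ⁻¹⁾, ·) | μ_j) G⁽ʲ⁻¹⁾(dx⁽ʲ⁻¹⁾) = m_j (∫ φ_j dG⁽ʲ⁾ − ∫ φ_{j−1} dG⁽ʲ⁻¹⁾). -/
open MeasureTheory ProbabilityTheory Filter Real

open Classical in
/-- Empirical measure `(1/N) ∑_{i<N} δ_{x i}` as a probability measure (junk value for `N = 0`). -/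
noncomputable def empMeas {T : Type*} [MeasurableSpace T] [Nonempty T] (N : ℕ) (x : ℕ → T) :
    ProbabilityMeasure T :=
  if h : 0 < N then
    ⟨(N : ENNReal)⁻¹ • ∑ i ∈ Finset.range N, Measure.dirac (x i), by
      constructor
      simp only [Measure.smul_apply, Measure.coe_finset_sum, Finset.sum_apply,
        Measure.dirac_apply' _ MeasurableSet.univ, Set.indicator_univ,
        Pi.one_apply, Finset.sum_const, Finset.card_range, nsmul_eq_mul, mul_one,
        smul_eq_mul]
      exact ENNReal.inv_mul_cancel (by exact_mod_cast h.ne') (by simp)⟩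
  else ⟨Measure.dirac (Classical.arbitrary T), inferInstance⟩

/-- Projection onto the first `j+1` coordinates. -/
def firstCoords {S : Type*} {n : ℕ} (j : Fin n) (x : Fin n → S) : Fin (j.1 + 1) → S :=
  fun k => x (Fin.castLE j.2 k)

lemma measurable_firstCoords {S : Type*} [MeasurableSpace S] {n : ℕ} (j : Fin n) :
    Measurable (firstCoords (S := S) j) :=
  measurable_pi_lambda _ fun _k => measurable_pi_apply _

/-- The marginal of a probability measure on `Sⁿ` on the first `j+1` coordinates. -/
noncomputable def margPM {S : Type*} [MeasurableSpace S] {n : ℕ} (j : Fin n)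
    (ν : ProbabilityMeasure (Fin n → S)) : ProbabilityMeasure (Fin (j.1 + 1) → S) :=
  ν.map (measurable_firstCoords j).aemeasurable

/-- The marginal of a measure on `Sⁿ` on the first `j+1` coordinates. -/
noncomputable def margM {S : Type*} [MeasurableSpace S] {n : ℕ} (j : Fin n)
    (ν : Measure (Fin n → S)) : Measure (Fin (j.1 + 1) → S) :=
  ν.map (firstCoords j)

/-- The marginal `μ⁽ʲ⁾ = μ₁ ⊗ ⋯ ⊗ μ_{j+1}` of the product measure. -/
noncomputable def margPi {S : Type*} [MeasurableSpace S] {n : ℕ} (μ : Fin n → Measure S)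
    (j : Fin n) : Measure (Fin (j.1 + 1) → S) :=
  Measure.pi (fun k => μ (Fin.castLE j.2 k))

/-- `Γ_j = γ₁ + ⋯ + γ_{j+1}`. -/
noncomputable def gam {n : ℕ} (γ : Fin n → ℝ) (j : Fin n) : ℝ :=
  ∑ k : Fin (j.1 + 1), γ (Fin.castLE j.2 k)
section Parisi

variable {S : Type*} [MeasurableSpace S]

/-- The Parisi recursion: `phiIter μ m φ k` is `φ_{n−k}`, i.e. `φ_n = φ` and
`φ_{j−1} = (1/m_j) log ∫ exp(m_j φ_j) dμ_j`, written as a function on `Sⁿ`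
(depending only on the first `n−k` coordinates). -/
noncomputable def phiIter {n : ℕ} (μ : Fin n → Measure S) (m : Fin n → ℝ)
    (φ : (Fin n → S) → ℝ) : ℕ → (Fin n → S) → ℝ
  | 0 => φ
  | (k+1) => fun x =>
      if h : n - k - 1 < n then
        (1 / m ⟨n - k - 1, h⟩) * Real.log (∫ y, Real.exp
          (m ⟨n - k - 1, h⟩ * phiIter μ m φ k (Function.update x ⟨n - k - 1, h⟩ y))
          ∂(μ ⟨n - k - 1, h⟩))
      else phiIter μ m φ k x

/-- `φ₀(m)`, the final (constant) value of the Parisi recursion. -/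
noncomputable def phiZero {n : ℕ} [Nonempty S] (μ : Fin n → Measure S) (m : Fin n → ℝ)
    (φ : (Fin n → S) → ℝ) : ℝ :=
  phiIter μ m φ n (fun _ => Classical.arbitrary S)

/-- `Parisi(m,φ) = ∑ᵢ (γᵢ log 2)/mᵢ + φ₀(m) − log 2`. -/
noncomputable def parisiVal {n : ℕ} [Nonempty S] (γ : Fin n → ℝ) (μ : Fin n → Measure S)
    (m : Fin n → ℝ) (φ : (Fin n → S) → ℝ) : ℝ :=
  (∑ i, γ i * Real.log 2 / m i) + phiZero μ m φ - Real.log 2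

/-- `Δ = {m : 0 < m₁ ≤ m₂ ≤ ⋯ ≤ m_n ≤ 1}`. -/
def inDelta {n : ℕ} (m : Fin n → ℝ) : Prop :=
  (∀ i, 0 < m i ∧ m i ≤ 1) ∧ Monotone m

end Parisi

section Gibbs

variable {S : Type*} [MeasurableSpace S]

/-- The Gibbs kernel `K_{j+1}(x⁽ʲ⁾, dy) = e^{m_j φ_{j+1}(x⁽ʲ⁾,y)} μ_j(dy) / e^{m_j φ_j(x⁽ʲ⁾)}`
(0-based level `j`), from the Parisi recursion. -/
noncomputable def gibbsKernel {n : ℕ} (μ : Fin n → Measure S) (m : Fin n → ℝ)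
    (φ : (Fin n → S) → ℝ) (j : Fin n) (x : Fin n → S) : Measure S :=
  (μ j).withDensity (fun y => ENNReal.ofReal (Real.exp
    (m j * phiIter μ m φ (n - ((j : ℕ) + 1)) (Function.update x j y)
      - m j * phiIter μ m φ (n - (j : ℕ)) x)))

/-- The Gibbs measure `G_{φ,m} = γ ⊗ K₂ ⊗ ⋯ ⊗ K_n`, realized through its density
`exp(∑_j m_j (φ_j − φ_{j−1}))` with respect to `μ = μ₁ ⊗ ⋯ ⊗ μ_n`. -/
noncomputable def gibbsMeasure {n : ℕ} (μ : Fin n → Measure S) (m : Fin n → ℝ)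
    (φ : (Fin n → S) → ℝ) : Measure (Fin n → S) :=
  (Measure.pi μ).withDensity (fun x => ENNReal.ofReal (Real.exp
    (∑ j : Fin n, (m j * phiIter μ m φ (n - ((j : ℕ) + 1)) x
      - m j * phiIter μ m φ (n - (j : ℕ)) x))))

end Gibbs

section AuxProof

open scoped NNReal ENNReal

variable {S : Type*} [MeasurableSpace S]

lemma measurable_update_pair {n : ℕ} (i : Fin n) :
    Measurable (fun p : (Fin n → S) × S => Function.update p.1 i p.2) := by
  refine measurable_pi_lambda _ fun k => ?_
  simp only [Function.update_apply]
  by_cases h : k = i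
  · simpa [h] using measurable_snd
  · simp only [h, ↓reduceIte]
    exact (measurable_pi_apply k).comp measurable_fst

lemma integrable_of_abs_le {α : Type*} [MeasurableSpace α] {ν : Measure α} [IsFiniteMeasure ν]
    {f : α → ℝ} (hf : AEStronglyMeasurable f ν) {C : ℝ} (hC : ∀ x, |f x| ≤ C) :
    Integrable f ν :=
  Integrable.mono' (integrable_const C) hf (ae_of_all _ fun x => by
    simpa [Real.norm_eq_abs] using hC x)

lemma abs_integral_le_of_abs_le {α : Type*} [MeasurableSpace α] (ν : Measure α)
    [IsProbabilityMeasure ν] (f : α → ℝ) {C : ℝ} (hC : ∀ x, |f x| ≤ C) :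
    |∫ x, f x ∂ν| ≤ C := by
  have := norm_integral_le_of_norm_le_const (μ := ν) (f := f) (C := C)
    (ae_of_all _ fun x => by simpa [Real.norm_eq_abs] using hC x)
  simpa [Real.norm_eq_abs, measure_univ] using this

lemma phiIter_measurable {n : ℕ} (μ : Fin n → Measure S) [∀ j, IsProbabilityMeasure (μ j)]
    (m : Fin n → ℝ) {φ : (Fin n → S) → ℝ} (hφm : Measurable φ) :
    ∀ k, Measurable (phiIter μ m φ k) := by
  intro k
  induction k with
  | zero => exact hφm
  | succ k ih =>
    unfold phiIter
    by_cases h : n - k - 1 < n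
    · simp only [dif_pos h]
      refine Measurable.const_mul ?_ _
      refine Measurable.log ?_
      have hsm : StronglyMeasurable (fun p : (Fin n → S) × S =>
          Real.exp (m ⟨n - k - 1, h⟩ *
            phiIter μ m φ k (Function.update p.1 ⟨n - k - 1, h⟩ p.2))) :=
        ((ih.comp (measurable_update_pair _)).const_mul _).exp.stronglyMeasurable
      exact hsm.integral_prod_right'.measurable
    · simpa only [dif_neg h] using ih

lemma phiIter_abs_le {n : ℕ} [Nonempty S] (μ : Fin n → Measure S)
    [∀ j, IsProbabilityMeasure (μ j)]
    {m : Fin n → ℝ} (hm : ∀ i, 0 < m i) {φ : (Fin n → S) → ℝ} (hφm : Measurable φ)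
    {C : ℝ} (hC : ∀ x, |φ x| ≤ C) :
    ∀ k x, |phiIter μ m φ k x| ≤ C := by
  intro k
  induction k with
  | zero => exact hC
  | succ k ih =>
    intro x
    unfold phiIter
    by_cases h : n - k - 1 < n
    · simp only [dif_pos h]
      set i : Fin n := ⟨n - k - 1, h⟩
      have hmi := hm i
      have hmeas : Measurable fun y => Real.exp (m i * phiIter μ m φ k (Function.update x i y)) :=
        (((phiIter_measurable μ m hφm k).comp (measurable_update x)).const_mul _).exp
      have hint : Integrable
          (fun y => Real.exp (m i * phiIter μ m φ k (Function.update x i y))) (μ i) := by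
        refine integrable_of_abs_le hmeas.aestronglyMeasurable
          (C := Real.exp (m i * C)) fun y => ?_
        rw [abs_of_nonneg (Real.exp_nonneg _)]
        exact Real.exp_le_exp.mpr
          (mul_le_mul_of_nonneg_left (le_of_abs_le (ih _)) hmi.le)
      set I := ∫ y, Real.exp (m i * phiIter μ m φ k (Function.update x i y)) ∂ μ i with hIdef
      have hlow : Real.exp (-(m i * C)) ≤ I := by
        have hconst : ∫ _ : S, Real.exp (-(m i * C)) ∂ μ i = Real.exp (-(m i * C)) := by simp
        rw [← hconst]
        refine integral_mono (integrable_const _) hint fun y => ?_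
        refine Real.exp_le_exp.mpr ?_
        have h1 : -C ≤ phiIter μ m φ k (Function.update x i y) := neg_le_of_abs_le (ih _)
        calc -(m i * C) = m i * (-C) := by ring
          _ ≤ m i * phiIter μ m φ k (Function.update x i y) :=
            mul_le_mul_of_nonneg_left h1 hmi.le
      have hup : I ≤ Real.exp (m i * C) := by
        have hconst : ∫ _ : S, Real.exp (m i * C) ∂ μ i = Real.exp (m i * C) := by simp
        rw [← hconst]
        exact integral_mono hint (integrable_const _) fun y =>
          Real.exp_le_exp.mpr (mul_le_mul_of_nonneg_left (le_of_abs_le (ih _)) hmi.le)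
      have hpos : 0 < I := lt_of_lt_of_le (Real.exp_pos _) hlow
      have hlog1 : Real.log I ≤ m i * C := (Real.log_le_iff_le_exp hpos).mpr hup
      have hlog2 : -(m i * C) ≤ Real.log I := (Real.le_log_iff_exp_le hpos).mpr hlow
      have habs : |Real.log I| ≤ m i * C := abs_le.mpr ⟨hlog2, hlog1⟩
      rw [abs_mul, abs_of_nonneg (by positivity : (0:ℝ) ≤ 1 / m i)]
      calc (1 / m i) * |Real.log I| ≤ (1 / m i) * (m i * C) :=
            mul_le_mul_of_nonneg_left habs (by positivity)
        _ = C := by field_simp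
    · simpa only [dif_neg h] using ih x

lemma phiIter_update {n : ℕ} (μ : Fin n → Measure S) (m : Fin n → ℝ) (φ : (Fin n → S) → ℝ) :
    ∀ (k : ℕ) (i : Fin n), n ≤ k + i.1 → ∀ (x : Fin n → S) (y : S),
      phiIter μ m φ k (Function.update x i y) = phiIter μ m φ k x := by
  intro k
  induction k with
  | zero => intro i h; exact absurd h (by have := i.isLt; omega)
  | succ k ih =>
    intro i h x y
    have hin := i.isLt
    unfold phiIter
    by_cases hlt : n - k - 1 < n
    · simp only [dif_pos hlt]
      by_cases hieq : i = (⟨n - k - 1, hlt⟩ : Fin n)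
      · subst hieq
        simp only [Function.update_idem]
      · have hki : n ≤ k + i.1 := by
          have : i.1 ≠ n - k - 1 := by simpa [Fin.ext_iff] using hieq
          omega
        have hcomm : ∀ z, phiIter μ m φ k
              (Function.update (Function.update x i y) ⟨n - k - 1, hlt⟩ z)
            = phiIter μ m φ k (Function.update x ⟨n - k - 1, hlt⟩ z) := by
          intro z
          rw [Function.update_comm hieq]
          exact ih i hki _ y
        simp only [hcomm]
    · simp only [dif_neg hlt]
      exact ih i (by omega) x y

lemma phiIter_succ_apply {n : ℕ} (μ : Fin n → Measure S) (m : Fin n → ℝ) (φ : (Fin n → S) → ℝ)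
    (t : ℕ) (ht : t < n) (x : Fin n → S) :
    phiIter μ m φ (n - t) x = (1 / m ⟨t, ht⟩) * Real.log (∫ y, Real.exp
      (m ⟨t, ht⟩ * phiIter μ m φ (n - (t + 1)) (Function.update x ⟨t, ht⟩ y)) ∂ μ ⟨t, ht⟩) := by
  have h1 : n - t = (n - t - 1) + 1 := by omega
  have h2 : n - (n - t - 1) - 1 = t := by omega
  have h3 : n - (t + 1) = n - t - 1 := by omega
  rw [h1, h3]
  simp only [phiIter, h2, dif_pos ht]

lemma integrable_exp_phiIter {n : ℕ} [Nonempty S] (μ : Fin n → Measure S)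
    [∀ j, IsProbabilityMeasure (μ j)]
    {m : Fin n → ℝ} (hm : ∀ i, 0 < m i) {φ : (Fin n → S) → ℝ} (hφm : Measurable φ)
    {C : ℝ} (hC : ∀ x, |φ x| ≤ C) (k : ℕ) (i : Fin n) (x : Fin n → S) :
    Integrable (fun y => Real.exp (m i * phiIter μ m φ k (Function.update x i y))) (μ i) := by
  have hmeas : Measurable fun y => Real.exp (m i * phiIter μ m φ k (Function.update x i y)) :=
    (((phiIter_measurable μ m hφm k).comp (measurable_update x)).const_mul _).exp
  refine integrable_of_abs_le hmeas.aestronglyMeasurable (C := Real.exp (m i * C)) fun y => ?_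
  rw [abs_of_nonneg (Real.exp_nonneg _)]
  exact Real.exp_le_exp.mpr (mul_le_mul_of_nonneg_left
    (le_of_abs_le (phiIter_abs_le μ hm hφm hC k _)) (hm i).le)

lemma exp_integral_phiIter {n : ℕ} [Nonempty S] (μ : Fin n → Measure S)
    [∀ j, IsProbabilityMeasure (μ j)]
    {m : Fin n → ℝ} (hm : ∀ i, 0 < m i) {φ : (Fin n → S) → ℝ} (hφm : Measurable φ)
    {C : ℝ} (hC : ∀ x, |φ x| ≤ C) (t : ℕ) (ht : t < n) (x : Fin n → S) :
    ∫ y, Real.exp (m ⟨t, ht⟩ * phiIter μ m φ (n - (t + 1)) (Function.update x ⟨t, ht⟩ y)) ∂ μ ⟨t, ht⟩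
      = Real.exp (m ⟨t, ht⟩ * phiIter μ m φ (n - t) x) := by
  set i : Fin n := ⟨t, ht⟩
  set I := ∫ y, Real.exp (m i * phiIter μ m φ (n - (t + 1)) (Function.update x i y)) ∂ μ i
    with hIdef
  have hint := integrable_exp_phiIter μ hm hφm hC (n - (t + 1)) i x
  have hlow : Real.exp (-(m i * C)) ≤ I := by
    have hconst : ∫ _ : S, Real.exp (-(m i * C)) ∂ μ i = Real.exp (-(m i * C)) := by simp
    rw [hIdef, ← hconst]
    refine integral_mono (integrable_const _) hint fun y => ?_
    refine Real.exp_le_exp.mpr ?_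
    have h1 : -C ≤ phiIter μ m φ (n - (t + 1)) (Function.update x i y) :=
      neg_le_of_abs_le (phiIter_abs_le μ hm hφm hC _ _)
    calc -(m i * C) = m i * (-C) := by ring
      _ ≤ _ := mul_le_mul_of_nonneg_left h1 (hm i).le
  have hpos : 0 < I := lt_of_lt_of_le (Real.exp_pos _) hlow
  rw [phiIter_succ_apply μ m φ t ht x]
  have hmne : m i ≠ 0 := (hm i).ne'
  have : m i * ((1 / m i) * Real.log I) = Real.log I := by field_simp
  rw [this, Real.exp_log hpos]

lemma pi_map_update {n : ℕ} (μ : Fin n → Measure S) [∀ j, IsProbabilityMeasure (μ j)]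
    (i : Fin n) :
    ((Measure.pi μ).prod (μ i)).map (fun p => Function.update p.1 i p.2) = Measure.pi μ := by
  refine (Measure.pi_eq (μ := μ) fun s hs => ?_).symm
  rw [Measure.map_apply (measurable_update_pair i) (MeasurableSet.univ_pi hs)]
  have hpre : (fun p : (Fin n → S) × S => Function.update p.1 i p.2) ⁻¹' (Set.univ.pi s)
      = (Set.univ.pi (Function.update s i Set.univ)) ×ˢ (s i) := by
    ext p
    simp only [Set.mem_preimage, Set.mem_pi, Set.mem_univ, forall_true_left, Set.mem_prod,
      Function.update_apply]
    constructor
    · intro hp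
      refine ⟨fun k => ?_, by simpa using hp i⟩
      by_cases hk : k = i
      · simp [hk]
      · simpa [hk] using hp k
    · rintro ⟨hp1, hp2⟩ k
      by_cases hk : k = i
      · simpa [hk] using hp2
      · simpa [hk] using hp1 k
  rw [hpre, Measure.prod_prod, Measure.pi_pi]
  have hupd : ∀ k, μ k (Function.update s i Set.univ k)
      = Function.update (fun k => μ k (s k)) i 1 k := by
    intro k
    by_cases hk : k = i
    · subst hk; simp
    · simp [Function.update_apply, hk]
  simp only [hupd]
  rw [Finset.prod_update_of_mem (Finset.mem_univ i), one_mul,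
    Finset.sdiff_singleton_eq_erase]
  exact Finset.prod_erase_mul _ _ (Finset.mem_univ i)

lemma integral_pi_update {n : ℕ} (μ : Fin n → Measure S) [∀ j, IsProbabilityMeasure (μ j)]
    (i : Fin n) {f : (Fin n → S) → ℝ} (hf : Measurable f) {C : ℝ} (hC : ∀ x, |f x| ≤ C) :
    ∫ x, f x ∂ Measure.pi μ
      = ∫ x, ∫ y, f (Function.update x i y) ∂ μ i ∂ Measure.pi μ := by
  conv_lhs => rw [← pi_map_update μ i]
  rw [integral_map (measurable_update_pair i).aemeasurable hf.aestronglyMeasurable]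
  exact integral_prod _ (integrable_of_abs_le
    (hf.comp (measurable_update_pair i)).aestronglyMeasurable (fun p => hC _))

/-- `ℓ_k = m_k (φ_k − φ_{k-1})` (0-based level `k`). -/
noncomputable def ellF {n : ℕ} (μ : Fin n → Measure S) (m : Fin n → ℝ) (φ : (Fin n → S) → ℝ)
    (k : Fin n) (x : Fin n → S) : ℝ :=
  m k * phiIter μ m φ (n - (k.1 + 1)) x - m k * phiIter μ m φ (n - k.1) x

/-- Partial sum `∑_{k<t} ℓ_k` of the log-density of the Gibbs measure. -/
noncomputable def WF {n : ℕ} (μ : Fin n → Measure S) (m : Fin n → ℝ) (φ : (Fin n → S) → ℝ)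
    (t : ℕ) (x : Fin n → S) : ℝ :=
  ∑ k ∈ Finset.univ.filter (fun k : Fin n => k.1 < t), ellF μ m φ k x

lemma ellF_measurable {n : ℕ} (μ : Fin n → Measure S) [∀ j, IsProbabilityMeasure (μ j)]
    (m : Fin n → ℝ) {φ : (Fin n → S) → ℝ} (hφm : Measurable φ) (k : Fin n) :
    Measurable (ellF μ m φ k) :=
  ((phiIter_measurable μ m hφm _).const_mul _).sub
    ((phiIter_measurable μ m hφm _).const_mul _)

lemma ellF_abs_le {n : ℕ} [Nonempty S] (μ : Fin n → Measure S) [∀ j, IsProbabilityMeasure (μ j)]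
    {m : Fin n → ℝ} (hm : ∀ i, 0 < m i) {φ : (Fin n → S) → ℝ} (hφm : Measurable φ)
    {C : ℝ} (hC : ∀ x, |φ x| ≤ C) (k : Fin n) (x : Fin n → S) :
    |ellF μ m φ k x| ≤ 2 * m k * C := by
  have h1 := phiIter_abs_le μ hm hφm hC (n - (k.1 + 1)) x
  have h2 := phiIter_abs_le μ hm hφm hC (n - k.1) x
  have := abs_sub (m k * phiIter μ m φ (n - (k.1 + 1)) x) (m k * phiIter μ m φ (n - k.1) x)
  calc |ellF μ m φ k x| ≤ |m k * phiIter μ m φ (n - (k.1 + 1)) x|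
        + |m k * phiIter μ m φ (n - k.1) x| := abs_sub _ _
    _ ≤ m k * C + m k * C := by
        rw [abs_mul, abs_mul, abs_of_pos (hm k)]
        exact add_le_add (mul_le_mul_of_nonneg_left h1 (hm k).le)
          (mul_le_mul_of_nonneg_left h2 (hm k).le)
    _ = 2 * m k * C := by ring

lemma WF_measurable {n : ℕ} (μ : Fin n → Measure S) [∀ j, IsProbabilityMeasure (μ j)]
    (m : Fin n → ℝ) {φ : (Fin n → S) → ℝ} (hφm : Measurable φ) (t : ℕ) :
    Measurable (WF μ m φ t) :=
  Finset.measurable_sum _ fun k _ => ellF_measurable μ m hφm k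

lemma WF_abs_le {n : ℕ} [Nonempty S] (μ : Fin n → Measure S) [∀ j, IsProbabilityMeasure (μ j)]
    {m : Fin n → ℝ} (hm : ∀ i, 0 < m i) {φ : (Fin n → S) → ℝ} (hφm : Measurable φ)
    {C : ℝ} (hC : ∀ x, |φ x| ≤ C) (t : ℕ) (x : Fin n → S) :
    |WF μ m φ t x| ≤ ∑ k : Fin n, 2 * m k * C := by
  have hC0 : 0 ≤ C := le_trans (abs_nonneg _) (hC (Classical.arbitrary _))
  calc |WF μ m φ t x| ≤ ∑ k ∈ Finset.univ.filter (fun k : Fin n => k.1 < t),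
        |ellF μ m φ k x| := Finset.abs_sum_le_sum_abs _ _
    _ ≤ ∑ k ∈ Finset.univ.filter (fun k : Fin n => k.1 < t), 2 * m k * C :=
        Finset.sum_le_sum fun k _ => ellF_abs_le μ hm hφm hC k x
    _ ≤ ∑ k : Fin n, 2 * m k * C := by
        refine Finset.sum_le_sum_of_subset_of_nonneg (Finset.filter_subset _ _) fun k _ _ => ?_
        have := hm k
        positivity

lemma ellF_update {n : ℕ} (μ : Fin n → Measure S) (m : Fin n → ℝ) (φ : (Fin n → S) → ℝ)
    (k i : Fin n) (hki : k.1 < i.1) (x : Fin n → S) (y : S) :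
    ellF μ m φ k (Function.update x i y) = ellF μ m φ k x := by
  unfold ellF
  rw [phiIter_update μ m φ (n - (k.1 + 1)) i (by have := k.isLt; omega) x y,
    phiIter_update μ m φ (n - k.1) i (by have := k.isLt; omega) x y]

lemma WF_update {n : ℕ} (μ : Fin n → Measure S) (m : Fin n → ℝ) (φ : (Fin n → S) → ℝ)
    (t : ℕ) (i : Fin n) (hti : t ≤ i.1) (x : Fin n → S) (y : S) :
    WF μ m φ t (Function.update x i y) = WF μ m φ t x := by
  unfold WF
  refine Finset.sum_congr rfl fun k hk => ?_
  rw [Finset.mem_filter] at hk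
  exact ellF_update μ m φ k i (by omega) x y

lemma WF_succ {n : ℕ} (μ : Fin n → Measure S) (m : Fin n → ℝ) (φ : (Fin n → S) → ℝ)
    (t : ℕ) (ht : t < n) (x : Fin n → S) :
    WF μ m φ (t + 1) x = ellF μ m φ ⟨t, ht⟩ x + WF μ m φ t x := by
  have hfil : Finset.univ.filter (fun k : Fin n => k.1 < t + 1)
      = insert ⟨t, ht⟩ (Finset.univ.filter (fun k : Fin n => k.1 < t)) := by
    ext k
    simp only [Finset.mem_filter, Finset.mem_univ, true_and, Finset.mem_insert, Fin.ext_iff]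
    omega
  have hnot : (⟨t, ht⟩ : Fin n) ∉ Finset.univ.filter (fun k : Fin n => k.1 < t) := by simp
  unfold WF
  rw [hfil, Finset.sum_insert hnot]

lemma integral_mul_exp_WF_aux {n : ℕ} [Nonempty S] (μ : Fin n → Measure S)
    [∀ j, IsProbabilityMeasure (μ j)]
    {m : Fin n → ℝ} (hm : ∀ i, 0 < m i) {φ : (Fin n → S) → ℝ} (hφm : Measurable φ)
    {C : ℝ} (hC : ∀ x, |φ x| ≤ C)
    {g : (Fin n → S) → ℝ} (hg : Measurable g) {Cg : ℝ} (hCg : ∀ x, |g x| ≤ Cg)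
    (d : ℕ) :
    ∀ t : ℕ, n = t + d →
    (∀ (i : Fin n), t ≤ i.1 → ∀ x y, g (Function.update x i y) = g x) →
    ∫ x, g x * Real.exp (WF μ m φ n x) ∂ Measure.pi μ
      = ∫ x, g x * Real.exp (WF μ m φ t x) ∂ Measure.pi μ := by
  have hCg0 : 0 ≤ Cg := le_trans (abs_nonneg _) (hCg (Classical.arbitrary _))
  set BW : ℝ := ∑ k : Fin n, 2 * m k * C with hBW
  induction d with
  | zero =>
    intro t hd _
    rw [show t = n by omega]
  | succ d ih =>
    intro t hd hginv
    have ht : t < n := by omega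
    have step : ∫ x, g x * Real.exp (WF μ m φ (t + 1) x) ∂ Measure.pi μ
        = ∫ x, g x * Real.exp (WF μ m φ t x) ∂ Measure.pi μ := by
      have hfm : Measurable fun x => g x * Real.exp (WF μ m φ (t + 1) x) :=
        hg.mul (WF_measurable μ m hφm (t + 1)).exp
      have hfb : ∀ x, |g x * Real.exp (WF μ m φ (t + 1) x)| ≤ Cg * Real.exp BW := by
        intro x
        rw [abs_mul, abs_of_nonneg (Real.exp_nonneg _)]
        exact mul_le_mul (hCg x)
          (Real.exp_le_exp.mpr (le_of_abs_le (WF_abs_le μ hm hφm hC (t + 1) x)))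
          (Real.exp_nonneg _) hCg0
      rw [integral_pi_update μ ⟨t, ht⟩ hfm hfb]
      refine integral_congr_ae (ae_of_all _ fun x => ?_)
      have hin : ∀ y, g (Function.update x ⟨t, ht⟩ y)
            * Real.exp (WF μ m φ (t + 1) (Function.update x ⟨t, ht⟩ y))
          = (g x * Real.exp (WF μ m φ t x)
              * Real.exp (-(m ⟨t, ht⟩ * phiIter μ m φ (n - t) x)))
            * Real.exp (m ⟨t, ht⟩
                * phiIter μ m φ (n - (t + 1)) (Function.update x ⟨t, ht⟩ y)) := by
        intro y
        rw [hginv ⟨t, ht⟩ le_rfl, WF_succ μ m φ t ht, WF_update μ m φ t ⟨t, ht⟩ le_rfl]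
        have hup : phiIter μ m φ (n - t) (Function.update x ⟨t, ht⟩ y)
            = phiIter μ m φ (n - t) x :=
          phiIter_update μ m φ (n - t) ⟨t, ht⟩ (by show n ≤ n - t + t; omega) x y
        simp only [ellF, hup]
        simp only [Real.exp_add, Real.exp_sub, Real.exp_neg]
        ring
      simp only [hin]
      rw [MeasureTheory.integral_const_mul, exp_integral_phiIter μ hm hφm hC t ht x,
        mul_assoc, ← Real.exp_add, neg_add_cancel, Real.exp_zero, mul_one]
    have := ih (t + 1) (by omega) (fun i hi x y => hginv i (by omega) x y)
    rw [this, step]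

lemma relEnt_gibbsKernel {n : ℕ} [Nonempty S] (μ : Fin n → Measure S)
    [∀ j, IsProbabilityMeasure (μ j)]
    {m : Fin n → ℝ} (hm : ∀ i, 0 < m i) {φ : (Fin n → S) → ℝ} (hφm : Measurable φ)
    {C : ℝ} (hC : ∀ x, |φ x| ≤ C) (j : Fin n) (x : Fin n → S) :
    (relEnt (gibbsKernel μ m φ j x) (μ j)).toReal
      = ∫ y, ellF μ m φ j (Function.update x j y)
          * Real.exp (ellF μ m φ j (Function.update x j y)) ∂ μ j := by
  set ℓ : S → ℝ := fun y => m j * phiIter μ m φ (n - (j.1 + 1)) (Function.update x j y)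
      - m j * phiIter μ m φ (n - j.1) x with hℓdef
  have hellF : ∀ y, ellF μ m φ j (Function.update x j y) = ℓ y := by
    intro y
    simp only [ellF, hℓdef]
    rw [phiIter_update μ m φ (n - j.1) j (by have := j.isLt; omega) x y]
  have hℓm : Measurable ℓ :=
    (((phiIter_measurable μ m hφm _).comp (measurable_update x)).const_mul _).sub
      measurable_const
  have hℓb : ∀ y, |ℓ y| ≤ 2 * m j * C := by
    intro y
    rw [← hellF y]
    exact ellF_abs_le μ hm hφm hC j _
  have hker : gibbsKernel μ m φ j x
      = (μ j).withDensity (fun y => ENNReal.ofReal (Real.exp (ℓ y))) := rfl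
  have hdm : Measurable fun y => ENNReal.ofReal (Real.exp (ℓ y)) :=
    hℓm.exp.ennreal_ofReal
  have hfin : IsFiniteMeasure (gibbsKernel μ m φ j x) := by
    rw [hker]
    refine isFiniteMeasure_withDensity (ne_of_lt ?_)
    calc ∫⁻ y, ENNReal.ofReal (Real.exp (ℓ y)) ∂ μ j
        ≤ ∫⁻ _, ENNReal.ofReal (Real.exp (2 * m j * C)) ∂ μ j :=
          lintegral_mono fun y =>
            ENNReal.ofReal_le_ofReal (Real.exp_le_exp.mpr (le_of_abs_le (hℓb y)))
      _ = ENNReal.ofReal (Real.exp (2 * m j * C)) := by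
          rw [lintegral_const, measure_univ, mul_one]
      _ < ⊤ := ENNReal.ofReal_lt_top
  have hac : gibbsKernel μ m φ j x ≪ μ j := by
    rw [hker]; exact withDensity_absolutelyContinuous _ _
  have hrn := Measure.rnDeriv_withDensity (μ j) hdm
  have hllr : llr (gibbsKernel μ m φ j x) (μ j) =ᵐ[μ j] ℓ := by
    filter_upwards [hrn] with y hy
    rw [llr, hker, hy, ENNReal.toReal_ofReal (Real.exp_nonneg _), Real.log_exp]
  have hllrK : llr (gibbsKernel μ m φ j x) (μ j) =ᵐ[gibbsKernel μ m φ j x] ℓ :=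
    hac.ae_eq hllr
  have hintK : Integrable (llr (gibbsKernel μ m φ j x) (μ j)) (gibbsKernel μ m φ j x) := by
    have : Integrable ℓ (gibbsKernel μ m φ j x) :=
      integrable_of_abs_le hℓm.aestronglyMeasurable hℓb
    exact this.congr hllrK.symm
  rw [relEnt, if_pos ⟨hac, hintK⟩, EReal.toReal_coe, integral_congr_ae hllrK]
  simp only [hellF]
  rw [hker]
  have hd2 : (fun y => ENNReal.ofReal (Real.exp (ℓ y)))
      = fun y => (((Real.exp (ℓ y)).toNNReal : ℝ≥0) : ℝ≥0∞) := rfl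
  rw [hd2, integral_withDensity_eq_integral_smul hℓm.exp.real_toNNReal ℓ]
  refine integral_congr_ae (ae_of_all _ fun y => ?_)
  simp [NNReal.smul_def, Real.coe_toNNReal _ (Real.exp_nonneg _), mul_comm]

lemma gibbsMeasure_eq_withDensity {n : ℕ} (μ : Fin n → Measure S) (m : Fin n → ℝ)
    (φ : (Fin n → S) → ℝ) :
    gibbsMeasure μ m φ = (Measure.pi μ).withDensity
      (fun x => (((Real.exp (WF μ m φ n x)).toNNReal : ℝ≥0) : ℝ≥0∞)) := by
  unfold gibbsMeasure
  congr 1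
  funext x
  have hWn : (∑ j : Fin n, (m j * phiIter μ m φ (n - ((j : ℕ) + 1)) x
      - m j * phiIter μ m φ (n - (j : ℕ)) x)) = WF μ m φ n x := by
    unfold WF ellF
    have : Finset.univ.filter (fun k : Fin n => k.1 < n) = Finset.univ := by
      ext k; simp [k.isLt]
    rw [this]
  rw [hWn]
  rfl

lemma isFiniteMeasure_gibbsMeasure {n : ℕ} [Nonempty S] (μ : Fin n → Measure S)
    [∀ j, IsProbabilityMeasure (μ j)]
    {m : Fin n → ℝ} (hm : ∀ i, 0 < m i) {φ : (Fin n → S) → ℝ} (hφm : Measurable φ)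
    {C : ℝ} (hC : ∀ x, |φ x| ≤ C) :
    IsFiniteMeasure (gibbsMeasure μ m φ) := by
  rw [gibbsMeasure_eq_withDensity]
  refine isFiniteMeasure_withDensity (ne_of_lt ?_)
  calc ∫⁻ x, (((Real.exp (WF μ m φ n x)).toNNReal : ℝ≥0) : ℝ≥0∞) ∂ Measure.pi μ
      ≤ ∫⁻ _, ENNReal.ofReal (Real.exp (∑ k : Fin n, 2 * m k * C)) ∂ Measure.pi μ := by
        refine lintegral_mono fun x => ?_
        rw [show (((Real.exp (WF μ m φ n x)).toNNReal : ℝ≥0) : ℝ≥0∞)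
            = ENNReal.ofReal (Real.exp (WF μ m φ n x)) from rfl]
        exact ENNReal.ofReal_le_ofReal
          (Real.exp_le_exp.mpr (le_of_abs_le (WF_abs_le μ hm hφm hC n x)))
    _ = ENNReal.ofReal (Real.exp (∑ k : Fin n, 2 * m k * C)) := by
        rw [lintegral_const, measure_univ, mul_one]
    _ < ⊤ := ENNReal.ofReal_lt_top

lemma integral_gibbsMeasure {n : ℕ} (μ : Fin n → Measure S)
    [∀ j, IsProbabilityMeasure (μ j)]
    (m : Fin n → ℝ) {φ : (Fin n → S) → ℝ} (hφm : Measurable φ)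
    (g : (Fin n → S) → ℝ) :
    ∫ x, g x ∂ gibbsMeasure μ m φ
      = ∫ x, g x * Real.exp (WF μ m φ n x) ∂ Measure.pi μ := by
  rw [gibbsMeasure_eq_withDensity,
    integral_withDensity_eq_integral_smul (WF_measurable μ m hφm n).exp.real_toNNReal g]
  refine integral_congr_ae (ae_of_all _ fun x => ?_)
  simp [NNReal.smul_def, Real.coe_toNNReal _ (Real.exp_nonneg _), mul_comm]

end AuxProof

/-- For the Gibbs measure `G = G_{φ,m}`, for each level `j`:
`∫ H(K_j(x⁽ʲ⁻¹⁾,·) | μ_j) dG⁽ʲ⁻¹⁾ = m_j (∫ φ_j dG⁽ʲ⁾ − ∫ φ_{j−1} dG⁽ʲ⁻¹⁾)`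
(marginals identified with integrals over `G` since `φ_j` depends only on the
first `j` coordinates). -/
theorem gibbs_kernel_entropy_identity {S : Type*} [MeasurableSpace S] [Nonempty S]
    {n : ℕ} (μ : Fin n → Measure S) [∀ j, IsProbabilityMeasure (μ j)]
    (m : Fin n → ℝ) (hm : ∀ i, 0 < m i)
    (φ : (Fin n → S) → ℝ) (hφm : Measurable φ) (hφb : ∃ C : ℝ, ∀ x, |φ x| ≤ C)
    (j : Fin n) :
    ∫ x, (relEnt (gibbsKernel μ m φ j x) (μ j)).toReal ∂(gibbsMeasure μ m φ)
      = m j * ((∫ x, phiIter μ m φ (n - ((j : ℕ) + 1)) x ∂(gibbsMeasure μ m φ))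
        - ∫ x, phiIter μ m φ (n - (j : ℕ)) x ∂(gibbsMeasure μ m φ)) := by
  obtain ⟨C, hC⟩ := hφb
  have hGfin : IsFiniteMeasure (gibbsMeasure μ m φ) := isFiniteMeasure_gibbsMeasure μ hm hφm hC
  set F : (Fin n → S) → ℝ := fun x => ∫ y, ellF μ m φ j (Function.update x j y)
      * Real.exp (ellF μ m φ j (Function.update x j y)) ∂ μ j with hFdef
  have hFm : Measurable F := by
    have h1 : Measurable fun p : (Fin n → S) × S => ellF μ m φ j (Function.update p.1 j p.2) :=
      (ellF_measurable μ m hφm j).comp (measurable_update_pair j)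
    exact (h1.mul h1.exp).stronglyMeasurable.integral_prod_right'.measurable
  have hFb : ∀ x, |F x| ≤ (2 * m j * C) * Real.exp (2 * m j * C) := by
    intro x
    refine abs_integral_le_of_abs_le (μ j) _ fun y => ?_
    rw [abs_mul, abs_of_nonneg (Real.exp_nonneg _)]
    have hC0 : 0 ≤ 2 * m j * C :=
      le_trans (abs_nonneg _) (ellF_abs_le μ hm hφm hC j (Function.update x j y))
    exact mul_le_mul (ellF_abs_le μ hm hφm hC j _)
      (Real.exp_le_exp.mpr (le_of_abs_le (ellF_abs_le μ hm hφm hC j _)))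
      (Real.exp_nonneg _) hC0
  have hFinv : ∀ (i : Fin n), j.1 ≤ i.1 → ∀ x y, F (Function.update x i y) = F x := by
    intro i hi x y
    by_cases hij : i = j
    · subst hij
      simp only [hFdef, Function.update_idem]
    · have hji : j.1 < i.1 := lt_of_le_of_ne hi (fun hv => hij (Fin.ext hv.symm))
      simp only [hFdef]
      refine integral_congr_ae (ae_of_all _ fun z => ?_)
      simp only [Function.update_comm hij, ellF_update μ m φ j i hji]
  have hL1 : ∫ x, (relEnt (gibbsKernel μ m φ j x) (μ j)).toReal ∂ gibbsMeasure μ m φ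
      = ∫ x, F x ∂ gibbsMeasure μ m φ :=
    integral_congr_ae (ae_of_all _ fun x => relEnt_gibbsKernel μ hm hφm hC j x)
  have hL2 : ∫ x, F x ∂ gibbsMeasure μ m φ
      = ∫ x, F x * Real.exp (WF μ m φ j.1 x) ∂ Measure.pi μ := by
    rw [integral_gibbsMeasure μ m hφm F]
    exact integral_mul_exp_WF_aux μ hm hφm hC hFm hFb (n - j.1) j.1
      (by have := j.isLt; omega) hFinv
  have hint1 : Integrable (fun x => phiIter μ m φ (n - (j.1 + 1)) x) (gibbsMeasure μ m φ) :=
    integrable_of_abs_le (phiIter_measurable μ m hφm _).aestronglyMeasurable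
      (fun x => phiIter_abs_le μ hm hφm hC _ x)
  have hint2 : Integrable (fun x => phiIter μ m φ (n - j.1) x) (gibbsMeasure μ m φ) :=
    integrable_of_abs_le (phiIter_measurable μ m hφm _).aestronglyMeasurable
      (fun x => phiIter_abs_le μ hm hφm hC _ x)
  have hR1 : m j * ((∫ x, phiIter μ m φ (n - (j.1 + 1)) x ∂ gibbsMeasure μ m φ)
        - ∫ x, phiIter μ m φ (n - j.1) x ∂ gibbsMeasure μ m φ)
      = ∫ x, ellF μ m φ j x ∂ gibbsMeasure μ m φ := by
    rw [mul_sub, ← MeasureTheory.integral_const_mul, ← MeasureTheory.integral_const_mul,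
      ← integral_sub (hint1.const_mul _) (hint2.const_mul _)]
    rfl
  have hellinv : ∀ (i : Fin n), j.1 + 1 ≤ i.1 → ∀ x y,
      ellF μ m φ j (Function.update x i y) = ellF μ m φ j x :=
    fun i hi x y => ellF_update μ m φ j i (by omega) x y
  have hgm : Measurable fun x => ellF μ m φ j x * Real.exp (WF μ m φ (j.1 + 1) x) :=
    (ellF_measurable μ m hφm j).mul (WF_measurable μ m hφm _).exp
  have hgb : ∀ x, |ellF μ m φ j x * Real.exp (WF μ m φ (j.1 + 1) x)|
      ≤ (2 * m j * C) * Real.exp (∑ k : Fin n, 2 * m k * C) := by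
    intro x
    rw [abs_mul, abs_of_nonneg (Real.exp_nonneg _)]
    have hC0 : 0 ≤ 2 * m j * C := le_trans (abs_nonneg _) (ellF_abs_le μ hm hφm hC j x)
    exact mul_le_mul (ellF_abs_le μ hm hφm hC j x)
      (Real.exp_le_exp.mpr (le_of_abs_le (WF_abs_le μ hm hφm hC _ x)))
      (Real.exp_nonneg _) hC0
  have hR2 : ∫ x, ellF μ m φ j x ∂ gibbsMeasure μ m φ
      = ∫ x, ellF μ m φ j x * Real.exp (WF μ m φ (j.1 + 1) x) ∂ Measure.pi μ := by
    rw [integral_gibbsMeasure μ m hφm (ellF μ m φ j)]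
    exact integral_mul_exp_WF_aux μ hm hφm hC (ellF_measurable μ m hφm j)
      (ellF_abs_le μ hm hφm hC j) (n - (j.1 + 1)) (j.1 + 1) (by have := j.isLt; omega) hellinv
  have hswap : ∫ x, ellF μ m φ j x * Real.exp (WF μ m φ (j.1 + 1) x) ∂ Measure.pi μ
      = ∫ x, F x * Real.exp (WF μ m φ j.1 x) ∂ Measure.pi μ := by
    rw [integral_pi_update μ j hgm hgb]
    refine integral_congr_ae (ae_of_all _ fun x => ?_)
    have hin : ∀ y, ellF μ m φ j (Function.update x j y)
          * Real.exp (WF μ m φ (j.1 + 1) (Function.update x j y))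
        = Real.exp (WF μ m φ j.1 x) * (ellF μ m φ j (Function.update x j y)
            * Real.exp (ellF μ m φ j (Function.update x j y))) := by
      intro y
      rw [WF_succ μ m φ j.1 j.isLt, WF_update μ m φ j.1 j le_rfl, Real.exp_add]
      simp only [Fin.eta]
      ring
    simp only [hin]
    rw [MeasureTheory.integral_const_mul]
    exact mul_comm _ (F x)
  rw [hL1, hL2, hR1, hR2, hswap]
end
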